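/- With the restricted ultrapower setup, the canonical embedding F : K → N = ∏_𝔛 K / U given by F(a) = [f_a], where f_a is the constant function with value a, is an elementary embedding; consequently N ⊨ T. -/

import Mathlib

namespace Paper

/-! ### Syntax of (second-order) arithmetic.

Terms of the language `L_A = {0, 1, +, ·, <}`, with number variables indexed by `ℕ`.
Formulas also allow atomic formulas `t ∈ X_k` (membership in a set variable) and
set quantifiers `allS`; first-order formulas are those avoiding both. -/

inductive PTerm where
  | var : ℕ → PTerm
  | zero : PTerm
  | one : PTerm
  | add : PTerm → PTerm → PTerm
  | mul : PTerm → PTerm → PTerm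

inductive Fml where
  | eq : PTerm → PTerm → Fml
  | lt : PTerm → PTerm → Fml
  | mem : PTerm → ℕ → Fml
  | not : Fml → Fml
  | imp : Fml → Fml → Fml
  | all : ℕ → Fml → Fml
  | allS : ℕ → Fml → Fml

def Fml.and (φ ψ : Fml) : Fml := .not (.imp φ (.not ψ))
def Fml.or (φ ψ : Fml) : Fml := .imp (.not φ) ψ
def Fml.iff (φ ψ : Fml) : Fml := (Fml.imp φ ψ).and (Fml.imp ψ φ)
def Fml.ex (x : ℕ) (φ : Fml) : Fml := .not (.all x (.not φ))
def Fml.exS (k : ℕ) (φ : Fml) : Fml := .not (.allS k (.not φ))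

/-- A structure for the language `{0, 1, +, ·, <}` on a carrier `M`
(bundled, so that several structures can live on the same carrier). -/
structure AStr (M : Type) where
  zero : M
  one : M
  add : M → M → M
  mul : M → M → M
  lt : M → M → Prop

/-- The standard model of arithmetic. -/
def natStr : AStr ℕ := ⟨0, 1, (· + ·), (· * ·), (· < ·)⟩

namespace PTerm

def vars : PTerm → Finset ℕ
  | var n => {n}
  | zero => ∅
  | one => ∅
  | add t u => t.vars ∪ u.vars
  | mul t u => t.vars ∪ u.vars

/-- Substitution of a term `r` for the variable `x` (used only with `r` closed or
with `vars r ⊆ {x}`, in which case it is capture-free). -/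
def subst (x : ℕ) (r : PTerm) : PTerm → PTerm
  | var n => if n = x then r else var n
  | zero => zero
  | one => one
  | add t u => add (subst x r t) (subst x r u)
  | mul t u => mul (subst x r t) (subst x r u)

def val {M : Type} (S : AStr M) (v : ℕ → M) : PTerm → M
  | var n => v n
  | zero => S.zero
  | one => S.one
  | add t u => S.add (t.val S v) (u.val S v)
  | mul t u => S.mul (t.val S v) (u.val S v)

end PTerm

namespace Fml

/-- Free number variables. -/
def freeN : Fml → Finset ℕ
  | eq t u => t.vars ∪ u.vars
  | lt t u => t.vars ∪ u.vars
  | mem t _ => t.vars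
  | not φ => φ.freeN
  | imp φ ψ => φ.freeN ∪ ψ.freeN
  | all x φ => φ.freeN.erase x
  | allS _ φ => φ.freeN

/-- Substitution of a term `r` for the (free) variable `x`. -/
def substN (x : ℕ) (r : PTerm) : Fml → Fml
  | eq t u => eq (PTerm.subst x r t) (PTerm.subst x r u)
  | lt t u => lt (PTerm.subst x r t) (PTerm.subst x r u)
  | mem t k => mem (PTerm.subst x r t) k
  | not φ => not (substN x r φ)
  | imp φ ψ => imp (substN x r φ) (substN x r ψ)
  | all y φ => if y = x then all y φ else all y (substN x r φ)
  | allS k φ => allS k (substN x r φ)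

/-- First-order formulas: no set variables, no set quantifiers. -/
def IsFO : Fml → Prop
  | eq _ _ => True
  | lt _ _ => True
  | mem _ _ => False
  | not φ => φ.IsFO
  | imp φ ψ => φ.IsFO ∧ ψ.IsFO
  | all _ φ => φ.IsFO
  | allS _ _ => False

/-- Arithmetical formulas: set variables allowed as parameters, but no set quantifiers. -/
def IsArith : Fml → Prop
  | eq _ _ => True
  | lt _ _ => True
  | mem _ _ => True
  | not φ => φ.IsArith
  | imp φ ψ => φ.IsArith ∧ ψ.IsArith
  | all _ φ => φ.IsArith
  | allS _ _ => False

end Fml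

/-! ### Satisfaction -/

/-- Satisfaction for a second-order structure `(M, 𝔛)`: number quantifiers range over `M`,
set quantifiers range over `𝔛`. -/
def Sat {M : Type} (S : AStr M) (𝔛 : Set (Set M)) : (ℕ → M) → (ℕ → Set M) → Fml → Prop
  | v, _, .eq t u => t.val S v = u.val S v
  | v, _, .lt t u => S.lt (t.val S v) (u.val S v)
  | v, w, .mem t k => t.val S v ∈ w k
  | v, w, .not φ => ¬ Sat S 𝔛 v w φ
  | v, w, .imp φ ψ => Sat S 𝔛 v w φ → Sat S 𝔛 v w ψ
  | v, w, .all x φ => ∀ a : M, Sat S 𝔛 (Function.update v x a) w φ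
  | v, w, .allS k φ => ∀ X ∈ 𝔛, Sat S 𝔛 v (Function.update w k X) φ

/-- First-order satisfaction. -/
def SatFO {M : Type} (S : AStr M) (v : ℕ → M) (φ : Fml) : Prop :=
  Sat S Set.univ v (fun _ => ∅) φ

/-- `M ⊨ T` for a first-order theory `T`. -/
def ModelsT {M : Type} (S : AStr M) (T : Set Fml) : Prop :=
  ∀ φ ∈ T, ∀ v, SatFO S v φ

/-- Semantic consequence (equivalently, by the completeness theorem, provability). -/
def Proves (T : Set Fml) (φ : Fml) : Prop :=
  ∀ (M : Type) (S : AStr M), ModelsT S T → ∀ v, SatFO S v φ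

/-- Consistency (equivalently, by the completeness theorem, having a model). -/
def ConsistentT (T : Set Fml) : Prop :=
  ∃ (M : Type) (S : AStr M), ModelsT S T

def IsFOSentence (φ : Fml) : Prop := φ.IsFO ∧ φ.freeN = ∅

/-- Completeness of a theory. -/
def CompleteT (T : Set Fml) : Prop :=
  ∀ φ, IsFOSentence φ → (Proves T φ ∨ Proves T φ.not)

/-! ### Peano arithmetic -/

def numeral : ℕ → PTerm
  | 0 => .zero
  | n + 1 => .add (numeral n) .one

def univClosure (φ : Fml) : Fml := (φ.freeN.sort (· ≤ ·)).foldr Fml.all φ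

/-- The induction axiom for `φ` in the variable `x` (before taking universal closure). -/
def indFml (φ : Fml) (x : ℕ) : Fml :=
  .imp ((φ.substN x .zero).and (.all x (.imp φ (φ.substN x (.add (.var x) .one)))))
    (.all x φ)

/-- The axioms of first-order Peano arithmetic `PA`. -/
def PAax : Set Fml :=
  {Fml.all 0 (.not (.eq (.add (.var 0) .one) .zero)),
   Fml.all 0 (.all 1 (.imp (.eq (.add (.var 0) .one) (.add (.var 1) .one))
     (.eq (.var 0) (.var 1)))),
   Fml.all 0 (.eq (.add (.var 0) .zero) (.var 0)),
   Fml.all 0 (.all 1 (.eq (.add (.var 0) (.add (.var 1) .one))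
     (.add (.add (.var 0) (.var 1)) .one))),
   Fml.all 0 (.eq (.mul (.var 0) .zero) .zero),
   Fml.all 0 (.all 1 (.eq (.mul (.var 0) (.add (.var 1) .one))
     (.add (.mul (.var 0) (.var 1)) (.var 0)))),
   Fml.all 0 (.all 1 (Fml.iff (.lt (.var 0) (.var 1))
     (Fml.ex 2 (.eq (.add (.var 0) (.add (.var 2) .one)) (.var 1)))))} ∪
  {ψ | ∃ φ x, Fml.IsFO φ ∧ ψ = univClosure (indFml φ x)}

/-! ### Gödel coding -/

/-- The Cantor pairing function (the canonical pairing `⟨·,·⟩`). -/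
def cpair (a b : ℕ) : ℕ := (a + b) * (a + b + 1) / 2 + a

def PTerm.code : PTerm → ℕ
  | .var n => cpair 0 n
  | .zero => cpair 1 0
  | .one => cpair 2 0
  | .add t u => cpair 3 (cpair t.code u.code)
  | .mul t u => cpair 4 (cpair t.code u.code)

def Fml.code : Fml → ℕ
  | .eq t u => cpair 5 (cpair t.code u.code)
  | .lt t u => cpair 6 (cpair t.code u.code)
  | .not φ => cpair 7 φ.code
  | .imp φ ψ => cpair 8 (cpair φ.code ψ.code)
  | .all x φ => cpair 9 (cpair x φ.code)
  | .mem t k => cpair 10 (cpair t.code k)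
  | .allS k φ => cpair 11 (cpair k φ.code)

/-- A theory identified with its set of Gödel codes. -/
def theoryCode (T : Set Fml) : Set ℕ := Fml.code '' T

/-! ### The arithmetical hierarchy (syntactic classes) -/

inductive IsDelta0 : Fml → Prop
  | eq (t u) : IsDelta0 (.eq t u)
  | lt (t u) : IsDelta0 (.lt t u)
  | mem (t k) : IsDelta0 (.mem t k)
  | not {φ} : IsDelta0 φ → IsDelta0 φ.not
  | imp {φ ψ} : IsDelta0 φ → IsDelta0 ψ → IsDelta0 (φ.imp ψ)
  | ball {φ} (x t) : x ∉ PTerm.vars t → IsDelta0 φ →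
      IsDelta0 (.all x (.imp (.lt (.var x) t) φ))

def IsSigma01 (φ : Fml) : Prop := ∃ x ψ, IsDelta0 ψ ∧ φ = Fml.ex x ψ

def IsPi01 (φ : Fml) : Prop := ∃ x ψ, IsDelta0 ψ ∧ φ = Fml.all x ψ

/-! ### Subsystems of second-order arithmetic, semantically -/

/-- The basic axioms (`PA⁻`, a discretely ordered commutative semiring). -/
def PAminusSem {M : Type} (S : AStr M) : Prop :=
  (∀ a b c : M, S.add a (S.add b c) = S.add (S.add a b) c) ∧
  (∀ a b : M, S.add a b = S.add b a) ∧
  (∀ a b c : M, S.mul a (S.mul b c) = S.mul (S.mul a b) c) ∧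
  (∀ a b : M, S.mul a b = S.mul b a) ∧
  (∀ a b c : M, S.mul a (S.add b c) = S.add (S.mul a b) (S.mul a c)) ∧
  (∀ a : M, S.add a S.zero = a) ∧
  (∀ a : M, S.mul a S.zero = S.zero) ∧
  (∀ a : M, S.mul a S.one = a) ∧
  (∀ a b c : M, S.lt a b → S.lt b c → S.lt a c) ∧
  (∀ a : M, ¬ S.lt a a) ∧
  (∀ a b : M, S.lt a b ∨ a = b ∨ S.lt b a) ∧
  (∀ a b c : M, S.lt a b → S.lt (S.add a c) (S.add b c)) ∧
  (∀ a b c : M, S.lt S.zero c → S.lt a b → S.lt (S.mul a c) (S.mul b c)) ∧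
  (∀ a b : M, S.lt a b → ∃ c : M, S.add a c = b) ∧
  S.lt S.zero S.one ∧
  (∀ a : M, S.lt S.zero a → a = S.one ∨ S.lt S.one a) ∧
  (∀ a : M, a = S.zero ∨ S.lt S.zero a)

/-- `(M,𝔛)` satisfies the induction axiom for `φ` in the variable `x`
(with arbitrary number and set parameters). -/
def SatInd {M : Type} (S : AStr M) (𝔛 : Set (Set M)) (φ : Fml) (x : ℕ) : Prop :=
  ∀ (v : ℕ → M) (w : ℕ → Set M), (∀ k, w k ∈ 𝔛) →
    (Sat S 𝔛 (Function.update v x S.zero) w φ ∧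
      ∀ a, Sat S 𝔛 (Function.update v x a) w φ →
        Sat S 𝔛 (Function.update v x (S.add a S.one)) w φ) →
    ∀ a, Sat S 𝔛 (Function.update v x a) w φ

/-- `(M,𝔛) ⊨ RCA₀`: basic axioms, `Σ⁰₁` induction and `Δ⁰₁` comprehension. -/
def SatRCA0 {M : Type} (S : AStr M) (𝔛 : Set (Set M)) : Prop :=
  PAminusSem S ∧
  (∀ φ x, IsSigma01 φ → SatInd S 𝔛 φ x) ∧
  (∀ φ ψ x, IsSigma01 φ → IsPi01 ψ →
    ∀ (v : ℕ → M) (w : ℕ → Set M), (∀ k, w k ∈ 𝔛) →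
      (∀ a, Sat S 𝔛 (Function.update v x a) w φ ↔ Sat S 𝔛 (Function.update v x a) w ψ) →
      {a : M | Sat S 𝔛 (Function.update v x a) w φ} ∈ 𝔛)

/-- `(M,𝔛) ⊨ ACA₀`: basic axioms, the induction axiom and arithmetical comprehension. -/
def SatACA0 {M : Type} (S : AStr M) (𝔛 : Set (Set M)) : Prop :=
  PAminusSem S ∧
  (∀ X ∈ 𝔛, S.zero ∈ X → (∀ a, a ∈ X → S.add a S.one ∈ X) → ∀ a, a ∈ X) ∧
  (∀ φ x, Fml.IsArith φ → ∀ (v : ℕ → M) (w : ℕ → Set M), (∀ k, w k ∈ 𝔛) →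
    {a : M | Sat S 𝔛 (Function.update v x a) w φ} ∈ 𝔛)

/-! ### Arithmetization inside a model

All notions below unfold the standard (`Δ₀`/`Σ₁`) arithmetized definitions at the
meta-level, using the operations of a structure `S : AStr M`.  On models of `IΣ₁`
they agree with satisfaction of the corresponding arithmetic formulas. -/

namespace AStr

variable {M : Type} (S : AStr M)

/-- Interpretation of numerals. -/
def num : ℕ → M
  | 0 => S.zero
  | n + 1 => S.add (num n) S.one

def le (a b : M) : Prop := S.lt a b ∨ a = b

def two : M := S.add S.one S.one

/-- `p = ⟨a,b⟩` for the Cantor pairing function: `2p = (a+b)(a+b+1) + 2a`. -/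
def PairRel (p a b : M) : Prop :=
  S.mul S.two p = S.add (S.mul (S.add a b) (S.add (S.add a b) S.one)) (S.mul S.two a)

/-- `r = a mod m`. -/
def ModRel (a m r : M) : Prop := S.lt r m ∧ ∃ q, a = S.add (S.mul q m) r

/-- Gödel's β-function: `x = β(c, i)` where `c = ⟨a,b⟩` and `x = a mod (1 + (i+1)b)`. -/
def BetaRel (c i x : M) : Prop :=
  ∃ a b, S.PairRel c a b ∧ S.ModRel a (S.add S.one (S.mul (S.add i S.one) b)) x

/-- `s` codes a sequence of length `l` (as `s = ⟨c, l⟩`). -/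
def SeqLen (s l : M) : Prop := ∃ c, S.PairRel s c l

/-- The `i`-th entry of the sequence coded by `s` is `x`. -/
def SeqAt (s i x : M) : Prop := ∃ c l, S.PairRel s c l ∧ S.lt i l ∧ S.BetaRel c i x

/-- The fixed `Δ₀` coding formula `x ∈ y` for (bounded) sets:
`y = ⟨a,b⟩` and `a mod (1 + (x+1)b) = 1` with modulus `> 1`, and `x < y`. -/
def MemRel (x y : M) : Prop :=
  S.lt x y ∧ ∃ a b, S.PairRel y a b ∧
    S.lt S.one (S.add S.one (S.mul (S.add x S.one) b)) ∧
    S.ModRel a (S.add S.one (S.mul (S.add x S.one) b)) S.one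

/-- Tagged pairs, used for codes of syntax: `x = ⟨tag, payload⟩`. -/
def Node (x tag payload : M) : Prop := S.PairRel x tag payload

/-- `x` is the code of the variable `v`. -/
def VarC (v x : M) : Prop := S.Node x (S.num 0) v

def AddC (t u y : M) : Prop := ∃ p, S.PairRel p t u ∧ S.Node y (S.num 3) p
def MulC (t u y : M) : Prop := ∃ p, S.PairRel p t u ∧ S.Node y (S.num 4) p
def EqC (t u y : M) : Prop := ∃ p, S.PairRel p t u ∧ S.Node y (S.num 5) p
def LtC (t u y : M) : Prop := ∃ p, S.PairRel p t u ∧ S.Node y (S.num 6) p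
def NotC (x y : M) : Prop := S.Node y (S.num 7) x
def ImpC (x y z : M) : Prop := ∃ p, S.PairRel p x y ∧ S.Node z (S.num 8) p
def AllC (v x y : M) : Prop := ∃ p, S.PairRel p v x ∧ S.Node y (S.num 9) p

/-- `s` codes a construction sequence for terms. -/
def IsTermConSeq (s : M) : Prop :=
  ∀ i x, S.SeqAt s i x →
    (∃ v, S.VarC v x) ∨ S.Node x (S.num 1) (S.num 0) ∨ S.Node x (S.num 2) (S.num 0) ∨
    (∃ j k y z, S.lt j i ∧ S.lt k i ∧ S.SeqAt s j y ∧ S.SeqAt s k z ∧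
      (S.AddC y z x ∨ S.MulC y z x))

/-- `x` is a term code (in the sense of `M`, possibly nonstandard). -/
def TermCodeM (x : M) : Prop := ∃ s i, S.IsTermConSeq s ∧ S.SeqAt s i x

/-- `s` codes a construction sequence for (first-order) formulas. -/
def IsFmlConSeq (s : M) : Prop :=
  ∀ i x, S.SeqAt s i x →
    (∃ t u, S.TermCodeM t ∧ S.TermCodeM u ∧ (S.EqC t u x ∨ S.LtC t u x)) ∨
    (∃ j y, S.lt j i ∧ S.SeqAt s j y ∧ S.NotC y x) ∨
    (∃ j k y z, S.lt j i ∧ S.lt k i ∧ S.SeqAt s j y ∧ S.SeqAt s k z ∧ S.ImpC y z x) ∨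
    (∃ j v y, S.lt j i ∧ S.SeqAt s j y ∧ S.AllC v y x)

/-- `x` is a formula code (in the sense of `M`, possibly nonstandard). -/
def FmlCodeM (x : M) : Prop := ∃ s i, S.IsFmlConSeq s ∧ S.SeqAt s i x

/-- Construction sequences of pairs (term code, occurrence flag for the variable `v`). -/
def IsOccConSeq (v s : M) : Prop :=
  ∀ i p, S.SeqAt s i p → ∃ x f, S.PairRel p x f ∧
    ((S.VarC v x ∧ f = S.num 1) ∨
     (∃ u, S.VarC u x ∧ u ≠ v ∧ f = S.num 0) ∨
     ((S.Node x (S.num 1) (S.num 0) ∨ S.Node x (S.num 2) (S.num 0)) ∧ f = S.num 0) ∨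
     (∃ j k y z g h pj pk, S.lt j i ∧ S.lt k i ∧ S.SeqAt s j pj ∧ S.SeqAt s k pk ∧
       S.PairRel pj y g ∧ S.PairRel pk z h ∧ (S.AddC y z x ∨ S.MulC y z x) ∧
       ((f = S.num 1 ∧ (g = S.num 1 ∨ h = S.num 1)) ∨
        (f = S.num 0 ∧ g = S.num 0 ∧ h = S.num 0))))

/-- `f = 1` iff the variable `v` occurs in the term coded by `t` (`f ∈ {0,1}`). -/
def OccT (v t f : M) : Prop :=
  ∃ s i p, S.IsOccConSeq v s ∧ S.SeqAt s i p ∧ S.PairRel p t f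

/-- Construction sequences of pairs (formula code, freeness flag for the variable `v`). -/
def IsFreeConSeq (v s : M) : Prop :=
  ∀ i p, S.SeqAt s i p → ∃ x f, S.PairRel p x f ∧
    ((∃ t u, (S.EqC t u x ∨ S.LtC t u x) ∧
       ((f = S.num 1 ∧ (S.OccT v t (S.num 1) ∨ S.OccT v u (S.num 1))) ∨
        (f = S.num 0 ∧ S.OccT v t (S.num 0) ∧ S.OccT v u (S.num 0)))) ∨
     (∃ j y g pj, S.lt j i ∧ S.SeqAt s j pj ∧ S.PairRel pj y g ∧ S.NotC y x ∧ f = g) ∨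
     (∃ j k y z g h pj pk, S.lt j i ∧ S.lt k i ∧ S.SeqAt s j pj ∧ S.SeqAt s k pk ∧
       S.PairRel pj y g ∧ S.PairRel pk z h ∧ S.ImpC y z x ∧
       ((f = S.num 1 ∧ (g = S.num 1 ∨ h = S.num 1)) ∨
        (f = S.num 0 ∧ g = S.num 0 ∧ h = S.num 0))) ∨
     (∃ j w y g pj, S.lt j i ∧ S.SeqAt s j pj ∧ S.PairRel pj y g ∧ S.AllC w y x ∧
       ((w = v ∧ f = S.num 0) ∨ (w ≠ v ∧ f = g))))

/-- `f = 1` iff the variable `v` is free in the formula coded by `φ`. -/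
def FreeF (v φ f : M) : Prop :=
  ∃ s i p, S.IsFreeConSeq v s ∧ S.SeqAt s i p ∧ S.PairRel p φ f

/-- Construction sequences of pairs (term code, result of substituting `t` for `v`). -/
def IsSubTConSeq (v t s : M) : Prop :=
  ∀ i p, S.SeqAt s i p → ∃ x x', S.PairRel p x x' ∧
    ((S.VarC v x ∧ x' = t) ∨
     (∃ u, S.VarC u x ∧ u ≠ v ∧ x' = x) ∨
     ((S.Node x (S.num 1) (S.num 0) ∨ S.Node x (S.num 2) (S.num 0)) ∧ x' = x) ∨
     (∃ j k y z y' z' pj pk, S.lt j i ∧ S.lt k i ∧ S.SeqAt s j pj ∧ S.SeqAt s k pk ∧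
       S.PairRel pj y y' ∧ S.PairRel pk z z' ∧
       ((S.AddC y z x ∧ S.AddC y' z' x') ∨ (S.MulC y z x ∧ S.MulC y' z' x'))))

/-- Substitution of the term (code) `t` for the variable `v` in terms: `x' = x[t/v]`. -/
def SubT (v t x x' : M) : Prop :=
  ∃ s i p, S.IsSubTConSeq v t s ∧ S.SeqAt s i p ∧ S.PairRel p x x'

/-- Construction sequences for capture-free substitution in formulas. -/
def IsSubFConSeq (v t s : M) : Prop :=
  ∀ i p, S.SeqAt s i p → ∃ x x', S.PairRel p x x' ∧
    ((∃ a b a' b', S.SubT v t a a' ∧ S.SubT v t b b' ∧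
       ((S.EqC a b x ∧ S.EqC a' b' x') ∨ (S.LtC a b x ∧ S.LtC a' b' x'))) ∨
     (∃ j y y' pj, S.lt j i ∧ S.SeqAt s j pj ∧ S.PairRel pj y y' ∧
       S.NotC y x ∧ S.NotC y' x') ∨
     (∃ j k y z y' z' pj pk, S.lt j i ∧ S.lt k i ∧ S.SeqAt s j pj ∧ S.SeqAt s k pk ∧
       S.PairRel pj y y' ∧ S.PairRel pk z z' ∧ S.ImpC y z x ∧ S.ImpC y' z' x') ∨
     (∃ w y, S.AllC w y x ∧
       ((w = v ∧ x' = x) ∨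
        (w ≠ v ∧ (S.OccT w t (S.num 0) ∨ S.FreeF v y (S.num 0)) ∧
          ∃ j y' pj, S.lt j i ∧ S.SeqAt s j pj ∧ S.PairRel pj y y' ∧ S.AllC w y' x'))))

/-- Capture-free substitution in formulas: `x' = x[t/v]`, with `t` substitutable for `v`. -/
def SubF (v t x x' : M) : Prop :=
  ∃ s i p, S.IsSubFConSeq v t s ∧ S.SeqAt s i p ∧ S.PairRel p x x'

/-- `x` is (the code of) a generalization `∀v₁ ⋯ ∀vₖ y` of `y`. -/
def GenOf (y x : M) : Prop :=
  ∃ s i, S.SeqAt s (S.num 0) y ∧ S.SeqAt s i x ∧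
    ∀ j z z', S.SeqAt s j z → S.SeqAt s (S.add j S.one) z' → S.le (S.add j S.one) i →
      ∃ v, S.AllC v z z'

/-- Codes of instances of the logical axiom schemes (a Hilbert-style calculus with
modus ponens as the only rule; axioms are taken together with their generalizations). -/
def LogAxCore (x : M) : Prop :=
  -- A1 : a → (b → a)
  (∃ a b y, S.FmlCodeM a ∧ S.FmlCodeM b ∧ S.ImpC b a y ∧ S.ImpC a y x) ∨
  -- A2 : (a → (b → c)) → ((a → b) → (a → c))
  (∃ a b c bc abc ab ac r, S.FmlCodeM a ∧ S.FmlCodeM b ∧ S.FmlCodeM c ∧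
    S.ImpC b c bc ∧ S.ImpC a bc abc ∧ S.ImpC a b ab ∧ S.ImpC a c ac ∧
    S.ImpC ab ac r ∧ S.ImpC abc r x) ∨
  -- A3 : (¬b → ¬a) → (a → b)
  (∃ a b na nb l r, S.FmlCodeM a ∧ S.FmlCodeM b ∧ S.NotC a na ∧ S.NotC b nb ∧
    S.ImpC nb na l ∧ S.ImpC a b r ∧ S.ImpC l r x) ∨
  -- A4 : ∀v a → a[t/v]
  (∃ v t a a' al, S.TermCodeM t ∧ S.FmlCodeM a ∧ S.AllC v a al ∧ S.SubF v t a a' ∧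
    S.ImpC al a' x) ∨
  -- A5 : ∀v (a → b) → (∀v a → ∀v b)
  (∃ v a b ab alab ala alb r, S.FmlCodeM a ∧ S.FmlCodeM b ∧ S.ImpC a b ab ∧
    S.AllC v ab alab ∧ S.AllC v a ala ∧ S.AllC v b alb ∧ S.ImpC ala alb r ∧
    S.ImpC alab r x) ∨
  -- A6 : a → ∀v a, for v not free in a
  (∃ v a ala, S.FmlCodeM a ∧ S.FreeF v a (S.num 0) ∧ S.AllC v a ala ∧ S.ImpC a ala x) ∨
  -- E1 : t = t
  (∃ t, S.TermCodeM t ∧ S.EqC t t x) ∨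
  -- E2 : u = w → w = u (variables)
  (∃ u w vu vw e1 e2, S.VarC u vu ∧ S.VarC w vw ∧ S.EqC vu vw e1 ∧ S.EqC vw vu e2 ∧
    S.ImpC e1 e2 x) ∨
  -- E3 : u = w → (w = z → u = z) (variables)
  (∃ u w z vu vw vz e1 e2 e3 r, S.VarC u vu ∧ S.VarC w vw ∧ S.VarC z vz ∧
    S.EqC vu vw e1 ∧ S.EqC vw vz e2 ∧ S.EqC vu vz e3 ∧ S.ImpC e2 e3 r ∧ S.ImpC e1 r x) ∨
  -- E4 : congruence of +, ·, < with respect to = (variables)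
  (∃ u1 w1 u2 w2 a1 b1 a2 b2 e1 e2 s1 s2 es r,
    S.VarC u1 a1 ∧ S.VarC w1 b1 ∧ S.VarC u2 a2 ∧ S.VarC w2 b2 ∧
    S.EqC a1 b1 e1 ∧ S.EqC a2 b2 e2 ∧
    ((S.AddC a1 a2 s1 ∧ S.AddC b1 b2 s2 ∧ S.EqC s1 s2 es) ∨
     (S.MulC a1 a2 s1 ∧ S.MulC b1 b2 s2 ∧ S.EqC s1 s2 es) ∨
     (S.LtC a1 a2 s1 ∧ S.LtC b1 b2 s2 ∧ S.ImpC s1 s2 es)) ∧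
    S.ImpC e2 es r ∧ S.ImpC e1 r x) ∨
  -- E5 : congruence of = (variables)
  (∃ u1 w1 u2 w2 a1 b1 a2 b2 e1 e2 d1 d2 inner r,
    S.VarC u1 a1 ∧ S.VarC w1 b1 ∧ S.VarC u2 a2 ∧ S.VarC w2 b2 ∧
    S.EqC a1 b1 e1 ∧ S.EqC a2 b2 e2 ∧ S.EqC a1 a2 d1 ∧ S.EqC b1 b2 d2 ∧
    S.ImpC d1 d2 inner ∧ S.ImpC e2 inner r ∧ S.ImpC e1 r x)

/-- Logical axioms: generalizations of instances of the axiom schemes. -/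
def LogAx (x : M) : Prop := ∃ y, S.LogAxCore y ∧ S.GenOf y x

/-- `s` codes a proof of `φ` from the set `Γ ⊆ M` of (codes of) sentences:
every entry is a logical axiom, a member of `Γ`, or follows by modus ponens. -/
def ProofFrom (Γ : Set M) (s φ : M) : Prop :=
  (∃ i, S.SeqAt s i φ) ∧
  ∀ i x, S.SeqAt s i x →
    S.LogAx x ∨ x ∈ Γ ∨
    (∃ j k y z, S.lt j i ∧ S.lt k i ∧ S.SeqAt s j y ∧ S.SeqAt s k z ∧ S.ImpC y x z)

/-- Provability (in the sense of `M`) from the axiom set `Γ ⊆ M`. -/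
def ProvFrom (Γ : Set M) (φ : M) : Prop := ∃ s, S.ProofFrom Γ s φ

/-- `M ⊨ Con_Γ` : there is no (possibly nonstandard) proof of a contradiction from `Γ`. -/
def ConOf (Γ : Set M) : Prop :=
  ¬ ∃ φ nφ, S.NotC φ nφ ∧ S.ProvFrom Γ φ ∧ S.ProvFrom Γ nφ

/-- `M ⊨ Con_T` for a (standard) theory `T`: `M` thinks every finite subtheory
of `T` is consistent. -/
def SatConTheory (T : Set Fml) : Prop :=
  ∀ F : Finset Fml, ↑F ⊆ T → S.ConOf {x : M | ∃ φ ∈ F, x = S.num (Fml.code φ)}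

/-! ### Coded sets, standard systems, filters on `P_𝔛` -/

/-- `A` is unbounded in `M`. -/
def Unb (A : Set M) : Prop := ∀ b, ∃ a ∈ A, S.lt b a

/-- `P_𝔛`: the collection of unbounded sets in `𝔛` (a partial order under `⊆`). -/
def PX (𝔛 : Set (Set M)) : Set (Set M) := {A | A ∈ 𝔛 ∧ S.Unb A}

/-- The `a`-th slice `(A)_a = {b | ⟨a,b⟩ ∈ A}`. -/
def SliceAt (A : Set M) (a : M) : Set M := {b | ∃ p, S.PairRel p a b ∧ p ∈ A}

/-- A function `M → M` is coded in `𝔛` if its graph (via the canonical pairing)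
belongs to `𝔛`. -/
def CodedFun (𝔛 : Set (Set M)) (f : M → M) : Prop :=
  ∃ G ∈ 𝔛, ∀ a b, f a = b ↔ b ∈ S.SliceAt G a

/-- A family `F` of sets is definable (over `(M,𝔛)`) if `{a | (A)_a ∈ F} ∈ 𝔛`
for every `A ∈ 𝔛`. -/
def DefinableFam (𝔛 F : Set (Set M)) : Prop :=
  ∀ A ∈ 𝔛, {a : M | S.SliceAt A a ∈ F} ∈ 𝔛

/-- `F` is a complete family: every function coded in `𝔛` with bounded range is
constant on some member of `F`. -/
def CompleteOn (𝔛 F : Set (Set M)) : Prop :=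
  ∀ f : M → M, S.CodedFun 𝔛 f → (∃ b, ∀ a, S.lt (f a) b) →
    ∃ A ∈ F, ∀ x ∈ A, ∀ y ∈ A, f x = f y

/-- The standard system `SSy(M)`: standard parts of the `M`-coded sets. -/
def SSy : Set (Set ℕ) := {A | ∃ c : M, ∀ n : ℕ, (n ∈ A ↔ S.MemRel (S.num n) c)}

/-- `M` is nonstandard. -/
def Nonstd : Prop := ∃ a : M, ∀ n : ℕ, a ≠ S.num n

/-- `M` is recursively saturated: every recursive type (in the variable `0`, with
finitely many parameters assigned to the variables `1, …, k`) that is finitely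
realized in `M` is realized in `M`. -/
def RecSat : Prop :=
  ∀ (p : Set Fml) (k : ℕ) (par : ℕ → M),
    (∀ φ ∈ p, Fml.IsFO φ ∧ φ.freeN ⊆ Finset.range (k + 1)) →
    ComputablePred (fun n => ∃ φ ∈ p, Fml.code φ = n) →
    (∀ F : Finset Fml, ↑F ⊆ p →
      ∃ a : M, ∀ φ ∈ F, SatFO S (fun i => if i = 0 then a else par i) φ) →
    ∃ a : M, ∀ φ ∈ p, SatFO S (fun i => if i = 0 then a else par i) φ

/-- `c` is the least code of the (bounded) set `A`. -/
def IsLeastCode (A : Set M) (c : M) : Prop :=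
  (∀ x, S.MemRel x c ↔ x ∈ A) ∧ ∀ c', (∀ x, S.MemRel x c' ↔ x ∈ A) → S.le c c'

/-- `A* = {⟨A ∩ I_{<a}⟩ | a ∈ M}`, the set of least codes of initial segments of `A`. -/
def star (A : Set M) : Set M :=
  {c | ∃ a, S.IsLeastCode (A ∩ {b | S.lt b a}) c}

end AStr

/-! ### Filters and partial orders of sets -/

/-- A filter on a partial order `P` of sets, ordered by inclusion: a proper, nonempty,
upward closed, downward directed subset of `P`. -/
def IsFilterOn {α : Type} (P F : Set (Set α)) : Prop :=
  F ⊆ P ∧ F.Nonempty ∧ F ≠ P ∧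
  (∀ A ∈ F, ∀ B ∈ P, A ⊆ B → B ∈ F) ∧
  (∀ A ∈ F, ∀ B ∈ F, ∃ C ∈ F, C ⊆ A ∧ C ⊆ B)

/-- An ultrafilter on a partial order of sets: a maximal filter. -/
def IsUltraOn {α : Type} (P U : Set (Set α)) : Prop :=
  IsFilterOn P U ∧ ∀ F, IsFilterOn P F → U ⊆ F → F = U

/-- A principal filter on a partial order of sets. -/
def IsPrincipalOn {α : Type} (P U : Set (Set α)) : Prop :=
  ∃ A ∈ P, U = {B | B ∈ P ∧ A ⊆ B}

/-- The countable chain condition for a partial order `P` of sets (ordered by `⊆`):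
every uncountable subset contains two distinct compatible elements. -/
def CCCOn {α : Type} (P : Set (Set α)) : Prop :=
  ∀ A : Set (Set α), A ⊆ P → ¬A.Countable →
    ∃ X ∈ A, ∃ Y ∈ A, X ≠ Y ∧ ∃ Z ∈ P, Z ⊆ X ∧ Z ⊆ Y

/-- `𝔛` is a Boolean algebra of sets. -/
def IsBoolAlg {α : Type} (𝔛 : Set (Set α)) : Prop :=
  Set.univ ∈ 𝔛 ∧ ∅ ∈ 𝔛 ∧
  (∀ A ∈ 𝔛, ∀ B ∈ 𝔛, A ∪ B ∈ 𝔛) ∧ (∀ A ∈ 𝔛, ∀ B ∈ 𝔛, A ∩ B ∈ 𝔛) ∧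
  (∀ A ∈ 𝔛, Aᶜ ∈ 𝔛)

/-- A filter on the Boolean algebra `𝔛`. -/
def IsBAFilter {α : Type} (𝔛 F : Set (Set α)) : Prop :=
  F ⊆ 𝔛 ∧ F.Nonempty ∧ ∅ ∉ F ∧
  (∀ A ∈ F, ∀ B ∈ 𝔛, A ⊆ B → B ∈ F) ∧
  (∀ A ∈ F, ∀ B ∈ F, A ∩ B ∈ F)

/-- An ultrafilter on the Boolean algebra `𝔛`: a maximal filter. -/
def IsBAUltra {α : Type} (𝔛 F : Set (Set α)) : Prop :=
  IsBAFilter 𝔛 F ∧ ∀ G, IsBAFilter 𝔛 G → F ⊆ G → G = F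

/-! ### Scott sets -/

/-- Oracle partial recursive functions: partial recursive in the oracle `O`. -/
inductive RecursiveIn (O : ℕ →. ℕ) : (ℕ →. ℕ) → Prop
  | oracle : RecursiveIn O O
  | zero : RecursiveIn O (pure 0)
  | succ : RecursiveIn O Nat.succ
  | left : RecursiveIn O ↑fun n : ℕ => n.unpair.1
  | right : RecursiveIn O ↑fun n : ℕ => n.unpair.2
  | pair {f g} : RecursiveIn O f → RecursiveIn O g →
      RecursiveIn O fun n => Nat.pair <$> f n <*> g n
  | comp {f g} : RecursiveIn O f → RecursiveIn O g →
      RecursiveIn O fun n => g n >>= f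
  | prec {f g} : RecursiveIn O f → RecursiveIn O g →
      RecursiveIn O (Nat.unpaired fun a n =>
        n.rec (f a) fun y IH => do let i ← IH; g (Nat.pair a (Nat.pair y i)))
  | rfind {f} : RecursiveIn O f →
      RecursiveIn O fun a => Nat.rfind fun n => (fun m => m = 0) <$> f (Nat.pair a n)

/-- The characteristic function of a set of natural numbers. -/
noncomputable def chi (A : Set ℕ) : ℕ →. ℕ :=
  fun n => Part.some (@ite _ (n ∈ A) (Classical.propDecidable _) 1 0)

/-- Turing reducibility: `B ≤_T A`. -/
def TuringLe (B A : Set ℕ) : Prop := RecursiveIn (chi A) (chi B)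

/-- A set of naturals coding a binary tree (codes of finite binary strings,
closed under initial segments). -/
def IsTreeCode (T : Set ℕ) : Prop :=
  (∀ n ∈ T, ∃ l : List Bool, Encodable.encode l = n) ∧
  (∀ l₁ l₂ : List Bool, l₁ <+: l₂ → Encodable.encode l₂ ∈ T → Encodable.encode l₁ ∈ T)

/-- `B` (as the characteristic function of a branch) is an infinite branch of the
binary tree coded by `T`. -/
def IsBranchThrough (B T : Set ℕ) : Prop :=
  ∀ n : ℕ, ∃ l : List Bool, l.length = n ∧
    (∀ i : Fin l.length, (l.get i = true ↔ (i : ℕ) ∈ B)) ∧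
    Encodable.encode l ∈ T

/-- A Scott set: a nonempty Boolean algebra of subsets of `ω` closed under relative
recursion and containing an infinite branch of every infinite binary tree coded in it. -/
def IsScottSet (𝔛 : Set (Set ℕ)) : Prop :=
  𝔛.Nonempty ∧
  (∀ A ∈ 𝔛, ∀ B ∈ 𝔛, A ∪ B ∈ 𝔛) ∧
  (∀ A ∈ 𝔛, Aᶜ ∈ 𝔛) ∧
  (∀ A ∈ 𝔛, ∀ B : Set ℕ, TuringLe B A → B ∈ 𝔛) ∧
  (∀ T ∈ 𝔛, IsTreeCode T → T.Infinite → ∃ B ∈ 𝔛, IsBranchThrough B T)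

/-- The sets represented in the theory `T`. -/
def repSet (T : Set Fml) : Set (Set ℕ) :=
  {A | ∃ φ : Fml, Fml.IsFO φ ∧ φ.freeN ⊆ {0} ∧
    ∀ n : ℕ, (n ∈ A → Proves T (φ.substN 0 (numeral n))) ∧
      (n ∉ A → Proves T (Fml.not (φ.substN 0 (numeral n))))}

/-- Martin's axiom. -/
def MartinsAxiom : Prop :=
  ∀ (P : Type) (_ : PartialOrder P),
    (∀ A : Set P, ¬A.Countable → ∃ x ∈ A, ∃ y ∈ A, x ≠ y ∧ ∃ z, z ≤ x ∧ z ≤ y) →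
    ∀ 𝒟 : Set (Set P), (∀ D ∈ 𝒟, ∀ x : P, ∃ y ∈ D, y ≤ x) →
      Cardinal.mk 𝒟 < Cardinal.continuum →
      ∃ F : Set P, F.Nonempty ∧ (∀ x ∈ F, ∀ y, x ≤ y → y ∈ F) ∧
        (∀ x ∈ F, ∀ y ∈ F, ∃ z ∈ F, z ≤ x ∧ z ≤ y) ∧
        ∀ D ∈ 𝒟, (F ∩ D).Nonempty

open Function

lemma PTerm.val_congr {M : Type} (S : AStr M) {v v' : ℕ → M} :
    ∀ (t : PTerm), (∀ i ∈ t.vars, v i = v' i) → t.val S v = t.val S v' := by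
  intro t
  induction t with
  | var n => intro h; exact h n (by simp [PTerm.vars])
  | zero => intro _; rfl
  | one => intro _; rfl
  | add t u iht ihu =>
      intro h
      simp only [PTerm.val]
      rw [iht fun i hi => h i (by simp [PTerm.vars, hi]),
          ihu fun i hi => h i (by simp [PTerm.vars, hi])]
  | mul t u iht ihu =>
      intro h
      simp only [PTerm.val]
      rw [iht fun i hi => h i (by simp [PTerm.vars, hi]),
          ihu fun i hi => h i (by simp [PTerm.vars, hi])]

lemma PTerm.val_update {M : Type} (S : AStr M) {t : PTerm} {x : ℕ} (h : x ∉ t.vars)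
    (v : ℕ → M) (b : M) : t.val S (Function.update v x b) = t.val S v :=
  PTerm.val_congr S t fun i hi => Function.update_of_ne (by rintro rfl; exact h hi) b v

lemma numeral_val {M : Type} (S : AStr M) (v : ℕ → M) : ∀ n, (numeral n).val S v = S.num n := by
  intro n
  induction n with
  | zero => rfl
  | succ n ih => simp only [numeral, PTerm.val, AStr.num, ih]

lemma numeral_vars : ∀ n, (numeral n).vars = ∅ := by
  intro n
  induction n with
  | zero => rfl
  | succ n ih => simp [numeral, PTerm.vars, ih]

lemma Sat_congr {M : Type} (S : AStr M) (𝔛 : Set (Set M)) :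
    ∀ (φ : Fml) (w : ℕ → Set M) (v v' : ℕ → M), (∀ i ∈ φ.freeN, v i = v' i) →
      (Sat S 𝔛 v w φ ↔ Sat S 𝔛 v' w φ) := by
  intro φ
  induction φ with
  | eq t u =>
      intro w v v' h
      simp only [Sat, Fml.freeN] at *
      rw [PTerm.val_congr S t fun i hi => h i (by simp [hi]),
          PTerm.val_congr S u fun i hi => h i (by simp [hi])]
  | lt t u =>
      intro w v v' h
      simp only [Sat, Fml.freeN] at *
      rw [PTerm.val_congr S t fun i hi => h i (by simp [hi]),
          PTerm.val_congr S u fun i hi => h i (by simp [hi])]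
  | mem t k =>
      intro w v v' h
      simp only [Sat, Fml.freeN] at *
      rw [PTerm.val_congr S t fun i hi => h i hi]
  | not φ ih =>
      intro w v v' h
      simp only [Sat]
      exact not_congr (ih w v v' h)
  | imp φ ψ ihφ ihψ =>
      intro w v v' h
      simp only [Sat]
      exact imp_congr (ihφ w v v' fun i hi => h i (by simp [Fml.freeN, hi]))
        (ihψ w v v' fun i hi => h i (by simp [Fml.freeN, hi]))
  | all x φ ih =>
      intro w v v' h
      simp only [Sat]
      refine forall_congr' fun a => ih w _ _ fun i hi => ?_
      by_cases hix : i = x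
      · subst hix; simp
      · rw [Function.update_of_ne hix, Function.update_of_ne hix]
        exact h i (by simp [Fml.freeN, Finset.mem_erase, hix, hi])
  | allS k φ ih =>
      intro w v v' h
      simp only [Sat]
      exact forall_congr' fun X => forall_congr' fun _ => ih _ _ _ h

lemma SatFO_congr {M : Type} (S : AStr M) (φ : Fml) (v v' : ℕ → M)
    (h : ∀ i ∈ φ.freeN, v i = v' i) : SatFO S v φ ↔ SatFO S v' φ :=
  Sat_congr S _ φ _ v v' h

/-! ### Arithmetic in a `PAminusSem` structure -/

section Arith
set_option linter.unusedSectionVars false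

variable {M : Type} {S : AStr M} (h : PAminusSem S)
include h

lemma aA : ∀ a b c : M, S.add a (S.add b c) = S.add (S.add a b) c := h.1
lemma aC : ∀ a b : M, S.add a b = S.add b a := h.2.1
lemma mA : ∀ a b c : M, S.mul a (S.mul b c) = S.mul (S.mul a b) c := h.2.2.1
lemma mC : ∀ a b : M, S.mul a b = S.mul b a := h.2.2.2.1
lemma dL : ∀ a b c : M, S.mul a (S.add b c) = S.add (S.mul a b) (S.mul a c) := h.2.2.2.2.1
lemma a0 : ∀ a : M, S.add a S.zero = a := h.2.2.2.2.2.1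
lemma m0 : ∀ a : M, S.mul a S.zero = S.zero := h.2.2.2.2.2.2.1
lemma m1 : ∀ a : M, S.mul a S.one = a := h.2.2.2.2.2.2.2.1
lemma ltT : ∀ a b c : M, S.lt a b → S.lt b c → S.lt a c := h.2.2.2.2.2.2.2.2.1
lemma ltI : ∀ a : M, ¬ S.lt a a := h.2.2.2.2.2.2.2.2.2.1
lemma ltTot : ∀ a b : M, S.lt a b ∨ a = b ∨ S.lt b a := h.2.2.2.2.2.2.2.2.2.2.1
lemma addLt : ∀ a b c : M, S.lt a b → S.lt (S.add a c) (S.add b c) :=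
  h.2.2.2.2.2.2.2.2.2.2.2.1
lemma mulLt : ∀ a b c : M, S.lt S.zero c → S.lt a b → S.lt (S.mul a c) (S.mul b c) :=
  h.2.2.2.2.2.2.2.2.2.2.2.2.1
lemma ltEx : ∀ a b : M, S.lt a b → ∃ c : M, S.add a c = b :=
  h.2.2.2.2.2.2.2.2.2.2.2.2.2.1
lemma lt01 : S.lt S.zero S.one := h.2.2.2.2.2.2.2.2.2.2.2.2.2.2.1
lemma posC : ∀ a : M, S.lt S.zero a → a = S.one ∨ S.lt S.one a :=
  h.2.2.2.2.2.2.2.2.2.2.2.2.2.2.2.1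
lemma zP : ∀ a : M, a = S.zero ∨ S.lt S.zero a := h.2.2.2.2.2.2.2.2.2.2.2.2.2.2.2.2

lemma za (a : M) : S.add S.zero a = a := (aC h _ _).trans (a0 h a)
lemma zm (a : M) : S.mul S.zero a = S.zero := (mC h _ _).trans (m0 h a)
lemma om (a : M) : S.mul S.one a = a := (mC h _ _).trans (m1 h a)
lemma dR (a b c : M) : S.mul (S.add a b) c = S.add (S.mul a c) (S.mul b c) := by
  rw [mC h, dL h, mC h c a, mC h c b]
lemma twoMul (a : M) : S.mul S.two a = S.add a a := by
  show S.mul (S.add S.one S.one) a = S.add a a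
  rw [dR h, om h]
lemma ltAsym {a b : M} (hab : S.lt a b) : ¬ S.lt b a := fun hba => ltI h a (ltT h _ _ _ hab hba)
lemma addLtL (a b c : M) (hab : S.lt a b) : S.lt (S.add c a) (S.add c b) := by
  rw [aC h c a, aC h c b]; exact addLt h _ _ _ hab
lemma addCancel {a b c : M} (e : S.add a c = S.add b c) : a = b := by
  rcases ltTot h a b with hl | he | hr
  · exact absurd (e ▸ addLt h _ _ c hl) (ltI h _)
  · exact he
  · exact absurd (e ▸ addLt h _ _ c hr) fun hh => ltI h _ hh
lemma addCancelL {a b c : M} (e : S.add c a = S.add c b) : a = b :=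
  addCancel h (by rwa [aC h a c, aC h b c])
lemma ltAddOne (a : M) : S.lt a (S.add a S.one) := by
  have := addLt h _ _ a (lt01 h)
  rwa [za h, aC h] at this

-- `le` lemmas
lemma leRefl (a : M) : S.le a a := Or.inr rfl
lemma leOfLt {a b : M} (hl : S.lt a b) : S.le a b := Or.inl hl
lemma leTrans {a b c : M} (h1 : S.le a b) (h2 : S.le b c) : S.le a c := by
  rcases h1 with h1 | rfl
  · rcases h2 with h2 | rfl
    · exact Or.inl (ltT h _ _ _ h1 h2)
    · exact Or.inl h1
  · exact h2
lemma ltOfLeOfLt {a b c : M} (h1 : S.le a b) (h2 : S.lt b c) : S.lt a c := by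
  rcases h1 with h1 | rfl
  · exact ltT h _ _ _ h1 h2
  · exact h2
lemma ltOfLtOfLe {a b c : M} (h1 : S.lt a b) (h2 : S.le b c) : S.lt a c := by
  rcases h2 with h2 | rfl
  · exact ltT h _ _ _ h1 h2
  · exact h1
lemma leAntisymm {a b : M} (h1 : S.le a b) (h2 : S.le b a) : a = b := by
  rcases h1 with h1 | rfl
  · rcases h2 with h2 | rfl
    · exact absurd (ltT h _ _ _ h1 h2) (ltI h _)
    · rfl
  · rfl
lemma notLtOfLe {a b : M} (h1 : S.le a b) : ¬ S.lt b a := fun hb =>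
  ltI h a (ltOfLeOfLt h h1 hb)
lemma leOfNotLt {a b : M} (h1 : ¬ S.lt b a) : S.le a b := by
  rcases ltTot h a b with hl | he | hr
  · exact Or.inl hl
  · exact Or.inr he
  · exact absurd hr h1
lemma addPosLt (a c : M) (hc : S.lt S.zero c) : S.lt a (S.add a c) := by
  have := addLt h _ _ a hc
  rwa [za h, aC h] at this
lemma leAddRight (a b : M) : S.le a (S.add a b) := by
  rcases zP h b with rfl | hb
  · exact Or.inr (a0 h a).symm
  · exact Or.inl (addPosLt h a b hb)
lemma succLe {a b : M} (hab : S.lt a b) : S.le (S.add a S.one) b := by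
  obtain ⟨c, hc⟩ := ltEx h a b hab
  rcases zP h c with rfl | hcpos
  · rw [a0 h] at hc; subst hc; exact absurd hab (ltI h a)
  · rcases posC h c hcpos with rfl | h1c
    · exact Or.inr hc
    · exact Or.inl (hc ▸ addLtL h S.one c a h1c)
lemma leOfLtSucc {a b : M} (hab : S.lt b (S.add a S.one)) : S.le b a := by
  rcases ltTot h b a with hl | he | hr
  · exact Or.inl hl
  · exact Or.inr he
  · exact absurd (ltOfLeOfLt h (succLe h hr) hab) (ltI h _)
lemma mulLe {a b c : M} (hab : S.le a b) : S.le (S.mul a c) (S.mul b c) := by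
  rcases hab with hl | rfl
  · rcases zP h c with rfl | hc
    · exact Or.inr (by rw [m0 h, m0 h])
    · exact Or.inl (mulLt h _ _ _ hc hl)
  · exact Or.inr rfl
lemma mulLe2 {a b c d : M} (hab : S.le a b) (hcd : S.le c d) :
    S.le (S.mul a c) (S.mul b d) := by
  refine leTrans h (mulLe h hab) ?_
  rw [mC h b c, mC h b d]
  exact mulLe h hcd
lemma addLe {a b c : M} (hab : S.le a b) : S.le (S.add a c) (S.add b c) := by
  rcases hab with hl | rfl
  · exact Or.inl (addLt h _ _ _ hl)
  · exact Or.inr rfl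
lemma addLeL {a b c : M} (hab : S.le a b) : S.le (S.add c a) (S.add c b) := by
  rw [aC h c a, aC h c b]; exact addLe h hab
lemma twoPos : S.lt S.zero S.two :=
  ltT h _ _ _ (lt01 h) (ltAddOne h S.one)

end Arith

/-! ### Definability machinery -/

section Defn

variable {M : Type} (S : AStr M) (𝔛 : Set (Set M)) (w : ℕ → Set M)

def Defn (P : (ℕ → M) → Prop) : Prop :=
  ∃ φ : Fml, φ.IsArith ∧ ∀ v : ℕ → M, (P v ↔ Sat S 𝔛 v w φ)

variable {S 𝔛 w}

lemma defn_congr {P Q : (ℕ → M) → Prop} (hP : Defn S 𝔛 w P) (hPQ : ∀ v, P v ↔ Q v) :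
    Defn S 𝔛 w Q := by
  obtain ⟨φ, h1, h2⟩ := hP
  exact ⟨φ, h1, fun v => (hPQ v).symm.trans (h2 v)⟩

lemma defn_eq (t u : PTerm) : Defn S 𝔛 w (fun v => t.val S v = u.val S v) :=
  ⟨.eq t u, trivial, fun v => by simp [Sat]⟩

lemma defn_lt (t u : PTerm) : Defn S 𝔛 w (fun v => S.lt (t.val S v) (u.val S v)) :=
  ⟨.lt t u, trivial, fun v => by simp [Sat]⟩

lemma defn_mem (t : PTerm) (k : ℕ) : Defn S 𝔛 w (fun v => t.val S v ∈ w k) :=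
  ⟨.mem t k, trivial, fun v => by simp [Sat]⟩

lemma defn_not {P : (ℕ → M) → Prop} (hP : Defn S 𝔛 w P) : Defn S 𝔛 w (fun v => ¬ P v) := by
  obtain ⟨φ, h1, h2⟩ := hP
  exact ⟨.not φ, h1, fun v => by simp [Sat]; exact not_congr (h2 v)⟩

lemma defn_imp {P Q : (ℕ → M) → Prop} (hP : Defn S 𝔛 w P) (hQ : Defn S 𝔛 w Q) :
    Defn S 𝔛 w (fun v => P v → Q v) := by
  obtain ⟨φ, h1, h2⟩ := hP
  obtain ⟨ψ, h3, h4⟩ := hQ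
  exact ⟨.imp φ ψ, ⟨h1, h3⟩, fun v => by simp [Sat]; exact imp_congr (h2 v) (h4 v)⟩

lemma defn_and {P Q : (ℕ → M) → Prop} (hP : Defn S 𝔛 w P) (hQ : Defn S 𝔛 w Q) :
    Defn S 𝔛 w (fun v => P v ∧ Q v) := by
  have := defn_not (defn_imp hP (defn_not hQ))
  exact defn_congr this fun v => by tauto

lemma defn_or {P Q : (ℕ → M) → Prop} (hP : Defn S 𝔛 w P) (hQ : Defn S 𝔛 w Q) :
    Defn S 𝔛 w (fun v => P v ∨ Q v) := by
  have := defn_imp (defn_not hP) hQ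
  exact defn_congr this fun v => by tauto

lemma defn_true : Defn S 𝔛 w (fun _ => True) :=
  defn_congr (defn_eq .zero .zero) (fun v => by simp)

lemma defn_ex (x : ℕ) {P : (ℕ → M) → Prop} (hP : Defn S 𝔛 w P) :
    Defn S 𝔛 w (fun v => ∃ b, P (Function.update v x b)) := by
  obtain ⟨φ, h1, h2⟩ := hP
  refine ⟨Fml.ex x φ, h1, fun v => ?_⟩
  simp only [Fml.ex, Sat, not_forall, not_not]
  exact exists_congr fun b => h2 _

lemma defn_all (x : ℕ) {P : (ℕ → M) → Prop} (hP : Defn S 𝔛 w P) :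
    Defn S 𝔛 w (fun v => ∀ b, P (Function.update v x b)) := by
  obtain ⟨φ, h1, h2⟩ := hP
  refine ⟨.all x φ, h1, fun v => ?_⟩
  simp only [Sat]
  exact forall_congr' fun b => h2 _

lemma defn_conjLt (l : ℕ) (Q : ℕ → (ℕ → M) → Prop) (hQ : ∀ i < l, Defn S 𝔛 w (Q i)) :
    Defn S 𝔛 w (fun v => ∀ i < l, Q i v) := by
  induction l with
  | zero => exact defn_congr defn_true (fun v => by simp)
  | succ l ih =>
      have h1 := ih fun i hi => hQ i (Nat.lt_succ_of_lt hi)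
      have h2 := hQ l (Nat.lt_succ_self l)
      refine defn_congr (defn_and h1 h2) fun v => ?_
      constructor
      · rintro ⟨ha, hb⟩ i hi
        rcases Nat.lt_succ_iff_lt_or_eq.mp hi with hi | rfl
        · exact ha i hi
        · exact hb
      · intro hh
        exact ⟨fun i hi => hh i (Nat.lt_succ_of_lt hi), hh l (Nat.lt_succ_self l)⟩

lemma defn_comp (hACA : SatACA0 S 𝔛) (hw : ∀ k, w k ∈ 𝔛) {P : (ℕ → M) → Prop}
    (hP : Defn S 𝔛 w P) (v : ℕ → M) : {a : M | P (Function.update v 0 a)} ∈ 𝔛 := by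
  obtain ⟨φ, h1, h2⟩ := hP
  have := hACA.2.2 φ 0 h1 v w hw
  convert this using 1
  ext a
  exact h2 _

/-! composite relations -/

lemma defn_pair (p a b : PTerm) :
    Defn S 𝔛 w (fun v => S.PairRel (p.val S v) (a.val S v) (b.val S v)) := by
  have := defn_eq (S := S) (𝔛 := 𝔛) (w := w)
    (.mul (.add .one .one) p)
    (.add (.mul (.add a b) (.add (.add a b) .one)) (.mul (.add .one .one) a))
  refine defn_congr this fun v => ?_
  simp only [PTerm.val, AStr.PairRel, AStr.two]

lemma defn_le (a b : PTerm) : Defn S 𝔛 w (fun v => S.le (a.val S v) (b.val S v)) :=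
  defn_or (defn_lt a b) (defn_eq a b)

lemma defn_mod (a m r : PTerm) (q : ℕ)
    (hq : ∀ i ∈ a.vars ∪ m.vars ∪ r.vars, i < q) :
    Defn S 𝔛 w (fun v => S.ModRel (a.val S v) (m.val S v) (r.val S v)) := by
  have base := defn_and (defn_lt (S := S) (𝔛 := 𝔛) (w := w) r m)
    (defn_ex q (defn_eq a (.add (.mul (.var q) m) r)))
  refine defn_congr base fun v => ?_
  simp only [AStr.ModRel]
  constructor
  · rintro ⟨h1, b, h2⟩
    refine ⟨h1, b, ?_⟩
    simp only [PTerm.val] at h2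
    rw [PTerm.val_update S (fun hm => Nat.lt_irrefl q (hq q (by simp [hm]))) v b,
        PTerm.val_update S (fun hm => Nat.lt_irrefl q (hq q (by simp [hm]))) v b,
        PTerm.val_update S (fun hm => Nat.lt_irrefl q (hq q (by simp [hm]))) v b] at h2
    rw [Function.update_self] at h2
    exact h2
  · rintro ⟨h1, b, h2⟩
    refine ⟨h1, b, ?_⟩
    simp only [PTerm.val]
    rw [PTerm.val_update S (fun hm => Nat.lt_irrefl q (hq q (by simp [hm]))) v b,
        PTerm.val_update S (fun hm => Nat.lt_irrefl q (hq q (by simp [hm]))) v b,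
        PTerm.val_update S (fun hm => Nat.lt_irrefl q (hq q (by simp [hm]))) v b]
    rw [Function.update_self]
    exact h2

end Defn

section Defn2

variable {M : Type} {S : AStr M} {𝔛 : Set (Set M)} {w : ℕ → Set M}

lemma PTerm.val_update_ge {t : PTerm} {q : ℕ} (ht : ∀ i ∈ t.vars, i < q) {x : ℕ}
    (hx : q ≤ x) (v : ℕ → M) (b : M) : t.val S (Function.update v x b) = t.val S v :=
  PTerm.val_update S (fun hm => absurd (ht x hm) (by omega)) v b

lemma PTerm.val_upd2 {t : PTerm} {q : ℕ} (ht : ∀ i ∈ t.vars, i < q) {x y : ℕ}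
    (hx : q ≤ x) (hy : q ≤ y) (v : ℕ → M) (b c : M) :
    t.val S (Function.update (Function.update v x b) y c) = t.val S v := by
  rw [PTerm.val_update_ge ht hy, PTerm.val_update_ge ht hx]

lemma defn_beta (c i r : PTerm) (q : ℕ) (hq : ∀ j ∈ c.vars ∪ i.vars ∪ r.vars, j < q) :
    Defn S 𝔛 w (fun v => S.BetaRel (c.val S v) (i.val S v) (r.val S v)) := by
  have hc : ∀ j ∈ c.vars, j < q := fun j hj => hq j (by simp [hj])
  have hi : ∀ j ∈ i.vars, j < q := fun j hj => hq j (by simp [hj])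
  have hr : ∀ j ∈ r.vars, j < q := fun j hj => hq j (by simp [hj])
  have base := defn_ex (S := S) (𝔛 := 𝔛) (w := w) q (defn_ex (q+1)
    (defn_and (defn_pair c (.var q) (.var (q+1)))
      (defn_mod (.var q) (.add .one (.mul (.add i .one) (.var (q+1)))) r (q+2)
        (by
          intro j hj
          simp only [PTerm.vars, Finset.union_empty, Finset.empty_union,
            Finset.mem_union, Finset.mem_singleton] at hj
          rcases hj with (rfl | (hj | rfl)) | hj
          · omega
          · exact Nat.lt_of_lt_of_le (hi j hj) (by omega)
          · omega
          · exact Nat.lt_of_lt_of_le (hr j hj) (by omega)))))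
  refine defn_congr base fun v => ?_
  have e1 : ∀ b1 b2 : M, c.val S (Function.update (Function.update v q b1) (q+1) b2)
      = c.val S v := fun b1 b2 => PTerm.val_upd2 hc (by omega) (by omega) v b1 b2
  have e2 : ∀ b1 b2 : M, i.val S (Function.update (Function.update v q b1) (q+1) b2)
      = i.val S v := fun b1 b2 => PTerm.val_upd2 hi (by omega) (by omega) v b1 b2
  have e3 : ∀ b1 b2 : M, r.val S (Function.update (Function.update v q b1) (q+1) b2)
      = r.val S v := fun b1 b2 => PTerm.val_upd2 hr (by omega) (by omega) v b1 b2
  have e4 : ∀ b1 b2 : M, (Function.update (Function.update v q b1) (q+1) b2) q = b1 :=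
    fun b1 b2 => by rw [Function.update_of_ne (by omega), Function.update_self]
  have e5 : ∀ b1 b2 : M, (Function.update (Function.update v q b1) (q+1) b2) (q+1) = b2 :=
    fun b1 b2 => Function.update_self _ _ _
  constructor
  · rintro ⟨b1, b2, h1, h2⟩
    simp only [PTerm.val, e1, e2, e3, e4, e5] at h1 h2
    exact ⟨b1, b2, h1, h2⟩
  · rintro ⟨b1, b2, h1, h2⟩
    refine ⟨b1, b2, ?_, ?_⟩
    · simp only [PTerm.val, e1, e2, e3, e4, e5]
      exact h1
    · simp only [PTerm.val, e1, e2, e3, e4, e5]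
      exact h2

lemma defn_seqlen (s l : PTerm) (q : ℕ) (hq : ∀ j ∈ s.vars ∪ l.vars, j < q) :
    Defn S 𝔛 w (fun v => S.SeqLen (s.val S v) (l.val S v)) := by
  have hs : ∀ j ∈ s.vars, j < q := fun j hj => hq j (by simp [hj])
  have hl : ∀ j ∈ l.vars, j < q := fun j hj => hq j (by simp [hj])
  have base := defn_ex (S := S) (𝔛 := 𝔛) (w := w) q (defn_pair s (.var q) l)
  refine defn_congr base fun v => ?_
  have e1 : ∀ b : M, s.val S (Function.update v q b) = s.val S v :=
    fun b => PTerm.val_update_ge hs (le_refl q) v b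
  have e2 : ∀ b : M, l.val S (Function.update v q b) = l.val S v :=
    fun b => PTerm.val_update_ge hl (le_refl q) v b
  have e3 : ∀ b : M, (Function.update v q b) q = b := fun b => Function.update_self _ _ _
  unfold AStr.SeqLen
  constructor
  · rintro ⟨b, hb⟩
    simp only [PTerm.val, e1, e2, e3] at hb
    exact ⟨b, hb⟩
  · rintro ⟨b, hb⟩
    refine ⟨b, ?_⟩
    simp only [PTerm.val, e1, e2, e3]
    exact hb

lemma defn_seqat (s i r : PTerm) (q : ℕ) (hq : ∀ j ∈ s.vars ∪ i.vars ∪ r.vars, j < q) :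
    Defn S 𝔛 w (fun v => S.SeqAt (s.val S v) (i.val S v) (r.val S v)) := by
  have hs : ∀ j ∈ s.vars, j < q := fun j hj => hq j (by simp [hj])
  have hi : ∀ j ∈ i.vars, j < q := fun j hj => hq j (by simp [hj])
  have hr : ∀ j ∈ r.vars, j < q := fun j hj => hq j (by simp [hj])
  have base := defn_ex (S := S) (𝔛 := 𝔛) (w := w) q (defn_ex (q+1)
    (defn_and (defn_pair s (.var q) (.var (q+1)))
      (defn_and (defn_lt i (.var (q+1)))
        (defn_beta (.var q) i r (q+2)
          (by
            intro j hj
            simp only [PTerm.vars, Finset.mem_union, Finset.mem_singleton] at hj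
            rcases hj with (rfl | hj) | hj
            · omega
            · exact Nat.lt_of_lt_of_le (hi j hj) (by omega)
            · exact Nat.lt_of_lt_of_le (hr j hj) (by omega))))))
  refine defn_congr base fun v => ?_
  have e1 : ∀ b1 b2 : M, s.val S (Function.update (Function.update v q b1) (q+1) b2)
      = s.val S v := fun b1 b2 => PTerm.val_upd2 hs (by omega) (by omega) v b1 b2
  have e2 : ∀ b1 b2 : M, i.val S (Function.update (Function.update v q b1) (q+1) b2)
      = i.val S v := fun b1 b2 => PTerm.val_upd2 hi (by omega) (by omega) v b1 b2
  have e3 : ∀ b1 b2 : M, r.val S (Function.update (Function.update v q b1) (q+1) b2)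
      = r.val S v := fun b1 b2 => PTerm.val_upd2 hr (by omega) (by omega) v b1 b2
  have e4 : ∀ b1 b2 : M, (Function.update (Function.update v q b1) (q+1) b2) q = b1 :=
    fun b1 b2 => by rw [Function.update_of_ne (by omega), Function.update_self]
  have e5 : ∀ b1 b2 : M, (Function.update (Function.update v q b1) (q+1) b2) (q+1) = b2 :=
    fun b1 b2 => Function.update_self _ _ _
  unfold AStr.SeqAt
  constructor
  · rintro ⟨b1, b2, h1, h2, h3⟩
    simp only [PTerm.val, e1, e2, e3, e4, e5] at h1 h2 h3
    exact ⟨b1, b2, h1, h2, h3⟩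
  · rintro ⟨b1, b2, h1, h2, h3⟩
    refine ⟨b1, b2, ?_, ?_, ?_⟩
    · simp only [PTerm.val, e1, e2, e3, e4, e5]; exact h1
    · simp only [PTerm.val, e1, e2, e3, e4, e5]; exact h2
    · simp only [PTerm.val, e1, e2, e3, e4, e5]; exact h3

lemma defn_slice (k : ℕ) (a b : PTerm) (q : ℕ) (hq : ∀ j ∈ a.vars ∪ b.vars, j < q) :
    Defn S 𝔛 w (fun v => b.val S v ∈ S.SliceAt (w k) (a.val S v)) := by
  have ha : ∀ j ∈ a.vars, j < q := fun j hj => hq j (by simp [hj])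
  have hb : ∀ j ∈ b.vars, j < q := fun j hj => hq j (by simp [hj])
  have base := defn_ex (S := S) (𝔛 := 𝔛) (w := w) q
    (defn_and (defn_pair (.var q) a b) (defn_mem (.var q) k))
  refine defn_congr base fun v => ?_
  have e1 : ∀ c : M, a.val S (Function.update v q c) = a.val S v :=
    fun c => PTerm.val_update_ge ha (le_refl q) v c
  have e2 : ∀ c : M, b.val S (Function.update v q c) = b.val S v :=
    fun c => PTerm.val_update_ge hb (le_refl q) v c
  have e3 : ∀ c : M, (Function.update v q c) q = c := fun c => Function.update_self _ _ _
  show _ ↔ b.val S v ∈ {x | ∃ p, S.PairRel p (a.val S v) x ∧ p ∈ w k}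
  simp only [Set.mem_setOf_eq]
  constructor
  · rintro ⟨p, h1, h2⟩
    simp only [PTerm.val, e1, e2, e3] at h1 h2
    exact ⟨p, h1, h2⟩
  · rintro ⟨p, h1, h2⟩
    refine ⟨p, ?_, ?_⟩
    · simp only [PTerm.val, e1, e2, e3]; exact h1
    · simp only [PTerm.val, e1, e2, e3]; exact h2

end Defn2


/-! ### Pairing facts and the least element principle -/

section Pairing

variable {M : Type} {S : AStr M} {𝔛 : Set (Set M)}

def PAmCommSemiring (h : PAminusSem S) : CommSemiring M := by
  letI : Zero M := ⟨S.zero⟩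
  letI : One M := ⟨S.one⟩
  letI : Add M := ⟨S.add⟩
  letI : Mul M := ⟨S.mul⟩
  exact
    { add_assoc := fun a b c => (aA h a b c).symm
      add_comm := aC h
      zero_add := za h
      add_zero := a0 h
      mul_assoc := fun a b c => (mA h a b c).symm
      mul_comm := mC h
      one_mul := om h
      mul_one := m1 h
      left_distrib := dL h
      right_distrib := dR h
      zero_mul := zm h
      mul_zero := m0 h
      nsmul := nsmulRec
      npow := npowRec }

lemma pairRel_ring (h : PAminusSem S) (p a b : M) :
    S.PairRel p a b ↔ S.add p p =
      S.add (S.mul (S.add a b) (S.add (S.add a b) S.one)) (S.add a a) := by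
  unfold AStr.PairRel
  rw [twoMul h, twoMul h]

lemma pair_total (hACA : SatACA0 S 𝔛) {X0 : Set M} (hX0 : X0 ∈ 𝔛) (a b : M) :
    ∃ p, S.PairRel p a b := by
  have h := hACA.1
  letI : CommSemiring M := PAmCommSemiring h
  have ea : ∀ x y : M, S.add x y = x + y := fun _ _ => rfl
  have em : ∀ x y : M, S.mul x y = x * y := fun _ _ => rfl
  have e0 : S.zero = (0 : M) := rfl
  have e1 : S.one = (1 : M) := rfl
  -- evenness of x*(x+1)
  have key : ∀ x : M, ∃ p : M, p + p = x * (x + 1) := by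
    have hD : Defn S 𝔛 (fun _ => X0) (fun v => ∃ c,
        (fun v' : ℕ → M => v' 0 * (v' 0 + 1) = v' 1 + v' 1) (Function.update v 1 c)) := by
      have := defn_ex (S := S) (𝔛 := 𝔛) (w := fun _ => X0) 1
        (defn_eq (.mul (.var 0) (.add (.var 0) .one)) (.add (.var 1) (.var 1)))
      refine defn_congr this fun v => ?_
      simp only [PTerm.val, ea, em, e1]
    have hY := defn_comp hACA (fun _ => hX0) hD (fun _ => S.zero)
    have hset : {a : M | (fun v => ∃ c,
        (fun v' : ℕ → M => v' 0 * (v' 0 + 1) = v' 1 + v' 1) (Function.update v 1 c))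
          (Function.update (fun _ => S.zero) 0 a)} =
        {x : M | ∃ c : M, x * (x + 1) = c + c} := by
      ext x
      simp only [Set.mem_setOf_eq, Function.update_apply]
      norm_num
    rw [hset] at hY
    have hz : (0 : M) ∈ {x : M | ∃ c : M, x * (x + 1) = c + c} :=
      ⟨0, by ring⟩
    have hs : ∀ a ∈ {x : M | ∃ c : M, x * (x + 1) = c + c},
        S.add a S.one ∈ {x : M | ∃ c : M, x * (x + 1) = c + c} := by
      rintro a ⟨c, hc⟩
      refine ⟨c + (a + 1), ?_⟩
      rw [ea, e1]
      have e : (a + 1) * (a + 1 + 1) = a * (a + 1) + ((a+1) + (a+1)) := by ring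
      rw [e, hc]
      ring
    intro x
    obtain ⟨c, hc⟩ := hACA.2.1 _ hY hz hs x
    exact ⟨c, hc.symm⟩
  obtain ⟨p', hp'⟩ := key (a + b)
  refine ⟨p' + a, ?_⟩
  rw [pairRel_ring h]
  simp only [ea, em, e1]
  rw [show p' + a + (p' + a) = p' + p' + (a + a) by ring, hp']

lemma pair_inj (h : PAminusSem S) {p a b a' b' : M}
    (h1 : S.PairRel p a b) (h2 : S.PairRel p a' b') : a = a' ∧ b = b' := by
  letI : CommSemiring M := PAmCommSemiring h
  have ea : ∀ x y : M, S.add x y = x + y := fun _ _ => rfl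
  have em : ∀ x y : M, S.mul x y = x * y := fun _ _ => rfl
  have e1 : S.one = (1 : M) := rfl
  rw [pairRel_ring h] at h1 h2
  simp only [ea, em, e1] at h1 h2
  have key : ∀ x y x' y' : M, S.lt (x + y) (x' + y') →
      S.lt ((x+y) * ((x+y) + 1) + (x + x)) ((x'+y') * ((x'+y') + 1) + (x' + x')) := by
    intro x y x' y' hlt
    have la : S.le x (x + y) := by rw [← ea]; exact leAddRight h x y
    have l1 : S.le ((x+y) * ((x+y) + 1) + (x + x))
        ((x+y) * ((x+y) + 1) + ((x+y) + (x+y))) := by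
      rw [← ea ((x+y) * ((x+y) + 1)), ← ea ((x+y) * ((x+y) + 1))]
      refine addLeL h ?_
      rw [← ea x x, ← ea (x+y) (x+y)]
      exact leTrans h (addLe h la) (addLeL h la)
    have l2 : S.lt ((x+y) * ((x+y) + 1) + ((x+y) + (x+y)))
        (((x+y) + 1) * (((x+y) + 1) + 1)) := by
      have e : ((x+y) + 1) * (((x+y) + 1) + 1) =
          ((x+y) * ((x+y) + 1) + ((x+y) + (x+y))) + (1 + 1) := by ring
      rw [e, ← ea _ (1+1), ← ea 1 1, ← e1]
      exact addPosLt h _ _ (twoPos h)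
    have l3 : S.le (((x+y) + 1) * (((x+y) + 1) + 1)) ((x'+y') * ((x'+y') + 1)) := by
      rw [← em, ← em]
      refine mulLe2 h ?_ ?_
      · rw [← ea]; exact succLe h hlt
      · rw [← ea ((x+y)+1) 1, ← ea (x'+y') 1]
        refine addLe h ?_
        rw [← ea]; exact succLe h hlt
    have l4 : S.le ((x'+y') * ((x'+y') + 1)) ((x'+y') * ((x'+y') + 1) + (x' + x')) := by
      rw [← ea]; exact leAddRight h _ _
    exact ltOfLeOfLt h l1 (ltOfLtOfLe h (ltOfLtOfLe h l2 l3) l4)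
  have hss : a + b = a' + b' := by
    rcases ltTot h (S.add a b) (S.add a' b') with hl | he | hr
    · rw [ea, ea] at hl
      have := key a b a' b' hl
      rw [← h1, ← h2] at this
      exact absurd this (ltI h _)
    · rw [ea, ea] at he; exact he
    · rw [ea, ea] at hr
      have := key a' b' a b hr
      rw [← h1, ← h2] at this
      exact absurd this (ltI h _)
  rw [← hss] at h2
  have hsum := h1.symm.trans h2
  have haa : a + a = a' + a' := addCancelL h hsum
  have hA : a = a' := by
    rcases ltTot h a a' with hl | he | hr
    · have := ltT h _ _ _ (addLt h a a' a hl) (addLtL h a a' a' hl)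
      rw [show S.add a a = a + a from rfl, show S.add a' a' = a' + a' from rfl, haa] at this
      exact absurd this (ltI h _)
    · exact he
    · have := ltT h _ _ _ (addLt h a' a a' hr) (addLtL h a' a a hr)
      rw [show S.add a' a' = a' + a' from rfl, show S.add a a = a + a from rfl, haa] at this
      exact absurd this (ltI h _)
  refine ⟨hA, ?_⟩
  rw [hA] at hss
  exact addCancelL h hss

lemma pair_fun (h : PAminusSem S) {p a b a' b' : M}
    (h1 : S.PairRel p a b) (h2 : S.PairRel p a' b') : a = a' ∧ b = b' :=
  pair_inj h h1 h2

/-- The least element principle. -/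
lemma least_elem (hACA : SatACA0 S 𝔛) {X : Set M} (hX : X ∈ 𝔛) {a0 : M} (ha0 : a0 ∈ X) :
    ∃ m, m ∈ X ∧ ∀ x ∈ X, S.le m x := by
  have h := hACA.1
  by_contra hno
  push_neg at hno
  have hno' : ∀ m ∈ X, ∃ x ∈ X, ¬ S.le m x := hno
  -- the set of strict upper bounds of the complement of X, via comprehension
  have hD : Defn S 𝔛 (fun _ => X) (fun v => ∀ c,
      (fun v' : ℕ → M => S.le (v' 1) (v' 0) → ¬ (v' 1 ∈ X)) (Function.update v 1 c)) := by
    have := defn_all (S := S) (𝔛 := 𝔛) (w := fun _ => X) 1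
      (defn_imp (defn_le (.var 1) (.var 0)) (defn_not (defn_mem (.var 1) 0)))
    refine defn_congr this fun v => ?_
    simp only [PTerm.val]
  have hY := defn_comp hACA (fun _ => hX) hD (fun _ => S.zero)
  have hset : {a : M | (fun v => ∀ c,
      (fun v' : ℕ → M => S.le (v' 1) (v' 0) → ¬ (v' 1 ∈ X)) (Function.update v 1 c))
        (Function.update (fun _ => S.zero) 0 a)} =
      {x : M | ∀ c, S.le c x → c ∉ X} := by
    ext x
    simp only [Set.mem_setOf_eq, Function.update_apply]
    norm_num
  rw [hset] at hY
  set Y := {x : M | ∀ c, S.le c x → c ∉ X} with hYdef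
  have hz : S.zero ∈ Y := by
    intro c hc hcX
    have hc0 : c = S.zero := by
      rcases hc with hc | rfl
      · rcases zP h c with rfl | hpos
        · rfl
        · exact absurd (ltT h _ _ _ hpos hc) (ltI h _)
      · rfl
    subst hc0
    obtain ⟨x, hx, hnle⟩ := hno' _ hcX
    rcases zP h x with rfl | hpos
    · exact hnle (leRefl h _)
    · exact hnle (Or.inl hpos)
  have hs : ∀ a ∈ Y, S.add a S.one ∈ Y := by
    intro a ha c hc hcX
    rcases hc with hc | rfl
    · exact ha c (leOfLtSucc h hc) hcX
    · -- c = a + 1 would be the least element of X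
      obtain ⟨x, hx, hnle⟩ := hno' _ hcX
      have hxlt : S.lt x (S.add a S.one) := by
        rcases ltTot h x (S.add a S.one) with hl | he | hr
        · exact hl
        · exact absurd (Or.inr he.symm : S.le (S.add a S.one) x) hnle
        · exact absurd (Or.inl hr : S.le (S.add a S.one) x) hnle
      exact ha x (leOfLtSucc h hxlt) hx
  have := hACA.2.1 Y hY hz hs a0
  exact this a0 (leRefl h _) ha0

end Pairing

/-! ### Closure properties of `𝔛` and ultrafilter lemmas -/

section Ultra

variable {M : Type} {S : AStr M} {𝔛 : Set (Set M)} {U : Set (Set M)}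

lemma inter_mem (hACA : SatACA0 S 𝔛) {X Y : Set M} (hX : X ∈ 𝔛) (hY : Y ∈ 𝔛) :
    X ∩ Y ∈ 𝔛 := by
  set w : ℕ → Set M := fun k => if k = 0 then X else Y with hw
  have hD : Defn S 𝔛 w (fun v => v 0 ∈ X ∧ v 0 ∈ Y) := by
    refine defn_congr (defn_and (defn_mem (.var 0) 0) (defn_mem (.var 0) 1)) fun v => ?_
    simp [PTerm.val, hw]
  have := defn_comp hACA (fun k => by by_cases hk : k = 0 <;> simp [hw, hk, hX, hY]) hD
    (fun _ => S.zero)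
  convert this using 1
  rfl

lemma compl_mem (hACA : SatACA0 S 𝔛) {X : Set M} (hX : X ∈ 𝔛) : Xᶜ ∈ 𝔛 := by
  have hD : Defn S 𝔛 (fun _ => X) (fun v => ¬ v 0 ∈ X) := by
    refine defn_congr (defn_not (defn_mem (.var 0) 0)) fun v => ?_
    simp [PTerm.val]
  have := defn_comp hACA (fun _ => hX) hD (fun _ => S.zero)
  convert this using 1
  rfl

lemma univ_mem (hACA : SatACA0 S 𝔛) {X0 : Set M} (hX0 : X0 ∈ 𝔛) :
    (Set.univ : Set M) ∈ 𝔛 := by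
  have hD : Defn S 𝔛 (fun _ => X0) (fun _ => True) := defn_true
  have := defn_comp hACA (fun _ => hX0) hD (fun _ => S.zero)
  convert this using 1
  rfl

lemma tail_mem (hACA : SatACA0 S 𝔛) {X0 : Set M} (hX0 : X0 ∈ 𝔛) (b : M) :
    {x : M | S.lt b x} ∈ 𝔛 := by
  have := hACA.2.2 (.lt (.var 1) (.var 0)) 0 trivial (fun _ => b) (fun _ => X0)
    (fun _ => hX0)
  convert this using 1
  rfl

lemma unb_mono {A B : Set M} (hAB : A ⊆ B) (hA : S.Unb A) : S.Unb B := fun b => by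
  obtain ⟨a, ha, hba⟩ := hA b
  exact ⟨a, hAB ha, hba⟩

lemma unb_nonempty {A : Set M} (hA : S.Unb A) : A.Nonempty := by
  obtain ⟨a, ha, _⟩ := hA S.zero
  exact ⟨a, ha⟩

lemma exists_ub (h : PAminusSem S) (b c : M) : ∃ d, S.le b d ∧ S.le c d := by
  rcases ltTot h b c with hl | he | hr
  · exact ⟨c, Or.inl hl, leRefl h c⟩
  · exact ⟨c, Or.inr he, leRefl h c⟩
  · exact ⟨b, leRefl h b, Or.inl hr⟩

lemma unb_inter_tail (h : PAminusSem S) {A : Set M} (hA : S.Unb A) (b : M) :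
    S.Unb (A ∩ {x : M | S.lt b x}) := by
  intro c
  obtain ⟨d, hbd, hcd⟩ := exists_ub h b c
  obtain ⟨a, ha, hda⟩ := hA d
  exact ⟨a, ⟨ha, ltOfLeOfLt h hbd hda⟩, ltOfLeOfLt h hcd hda⟩

lemma unb_tail (h : PAminusSem S) (b : M) : S.Unb {x : M | S.lt b x} := by
  intro c
  obtain ⟨d, hbd, hcd⟩ := exists_ub h b c
  exact ⟨S.add d S.one, ltOfLeOfLt h hbd (ltAddOne h d),
    ltOfLeOfLt h hcd (ltAddOne h d)⟩

variable (hU : IsUltraOn (S.PX 𝔛) U)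
include hU

lemma U_filter : IsFilterOn (S.PX 𝔛) U := hU.1
lemma U_sub : U ⊆ S.PX 𝔛 := hU.1.1
lemma U_unb {A : Set M} (hA : A ∈ U) : S.Unb A := (hU.1.1 hA).2
lemma U_setmem {A : Set M} (hA : A ∈ U) : A ∈ 𝔛 := (hU.1.1 hA).1
lemma U_nonempty : U.Nonempty := hU.1.2.1

lemma up_mem {A B : Set M} (hA : A ∈ U) (hB : B ∈ 𝔛) (hAB : A ⊆ B) : B ∈ U :=
  hU.1.2.2.2.1 A hA B ⟨hB, unb_mono hAB (U_unb hU hA)⟩ hAB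

lemma interU_mem (hACA : SatACA0 S 𝔛) {A B : Set M} (hA : A ∈ U) (hB : B ∈ U) :
    A ∩ B ∈ U := by
  obtain ⟨C, hC, hCA, hCB⟩ := hU.1.2.2.2.2 A hA B hB
  exact up_mem hU hC (inter_mem hACA (U_setmem hU hA) (U_setmem hU hB))
    (Set.subset_inter hCA hCB)

lemma empty_not_mem : (∅ : Set M) ∉ U := fun hh => by
  obtain ⟨a, ha⟩ := unb_nonempty (U_unb hU hh)
  exact ha

lemma univ_mem_U (hACA : SatACA0 S 𝔛) : (Set.univ : Set M) ∈ U := by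
  obtain ⟨B, hB⟩ := U_nonempty hU
  exact up_mem hU hB (univ_mem hACA (U_setmem hU hB)) (Set.subset_univ B)

/-- Every tail belongs to the ultrafilter. -/
lemma tail_mem_U (hACA : SatACA0 S 𝔛) (b : M) : {x : M | S.lt b x} ∈ U := by
  have h := hACA.1
  obtain ⟨B0, hB0⟩ := U_nonempty hU
  set P : Set (Set M) := S.PX 𝔛 with hPdef
  set G : Set (Set M) :=
    {D | D ∈ P ∧ ∃ B ∈ U, ∃ c, B ∩ {x : M | S.lt c x} ⊆ D} with hGdef
  have gU : U ⊆ G := by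
    intro D hD
    refine ⟨hU.1.1 hD, D, hD, S.zero, fun x hx => hx.1⟩
  have gdir : ∀ D1 ∈ G, ∀ D2 ∈ G, ∃ C ∈ G, C ⊆ D1 ∧ C ⊆ D2 := by
    rintro D1 ⟨hD1P, B1, hB1, c1, hc1⟩ D2 ⟨hD2P, B2, hB2, c2, hc2⟩
    obtain ⟨c, hc1c, hc2c⟩ := exists_ub h c1 c2
    have hB12 : B1 ∩ B2 ∈ U := interU_mem hU hACA hB1 hB2
    set C := (B1 ∩ B2) ∩ {x : M | S.lt c x} with hCdef
    have hC𝔛 : C ∈ 𝔛 := inter_mem hACA (U_setmem hU hB12) (tail_mem hACA (U_setmem hU hB1) c)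
    have hCunb : S.Unb C := unb_inter_tail h (U_unb hU hB12) c
    have hCP : C ∈ P := ⟨hC𝔛, hCunb⟩
    refine ⟨C, ⟨hCP, B1 ∩ B2, hB12, c, fun x hx => hx⟩, ?_, ?_⟩
    · intro x hx
      exact hc1 ⟨hx.1.1, ltOfLeOfLt h hc1c hx.2⟩
    · intro x hx
      exact hc2 ⟨hx.1.2, ltOfLeOfLt h hc2c hx.2⟩
  by_cases hprop : G = P
  · -- impossible: `P` is not downward directed (evens and odds)
    exfalso
    letI : CommSemiring M := PAmCommSemiring h
    have ea : ∀ x y : M, S.add x y = x + y := fun _ _ => rfl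
    have em : ∀ x y : M, S.mul x y = x * y := fun _ _ => rfl
    have e1 : S.one = (1 : M) := rfl
    set E : Set M := {x : M | ∃ c : M, x = c + c} with hEdef
    set O : Set M := {x : M | ∃ c : M, x = c + c + 1} with hOdef
    have hE𝔛 : E ∈ 𝔛 := by
      have hD : Defn S 𝔛 (fun _ => B0) (fun v => ∃ c, (fun v' : ℕ → M =>
          v' 0 = v' 1 + v' 1) (Function.update v 1 c)) := by
        refine defn_congr (defn_ex 1 (defn_eq (.var 0) (.add (.var 1) (.var 1))))
          fun v => ?_
        simp only [PTerm.val, ea]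
      have := defn_comp hACA (fun _ => U_setmem hU hB0) hD (fun _ => S.zero)
      convert this using 1
      rfl
    have hO𝔛 : O ∈ 𝔛 := by
      have hD : Defn S 𝔛 (fun _ => B0) (fun v => ∃ c, (fun v' : ℕ → M =>
          v' 0 = v' 1 + v' 1 + 1) (Function.update v 1 c)) := by
        refine defn_congr (defn_ex 1 (defn_eq (.var 0)
          (.add (.add (.var 1) (.var 1)) .one))) fun v => ?_
        simp only [PTerm.val, ea, e1]
      have := defn_comp hACA (fun _ => U_setmem hU hB0) hD (fun _ => S.zero)
      convert this using 1
      rfl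
    have hEunb : S.Unb E := by
      intro b'
      refine ⟨(b' + 1) + (b' + 1), ⟨b' + 1, rfl⟩, ?_⟩
      have h1 : S.lt b' (b' + 1) := by
        rw [← ea, ← e1]; exact ltAddOne h b'
      have h2 : S.le (b' + 1) ((b' + 1) + (b' + 1)) := by
        rw [← ea (b'+1) (b'+1)]; exact leAddRight h _ _
      exact ltOfLtOfLe h h1 h2
    have hOunb : S.Unb O := by
      intro b'
      refine ⟨b' + b' + 1, ⟨b', rfl⟩, ?_⟩
      have h1 : S.le b' (b' + b') := by rw [← ea]; exact leAddRight h _ _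
      have h2 : S.lt (b' + b') (b' + b' + 1) := by
        rw [← ea, ← e1]; exact ltAddOne h _
      exact ltOfLeOfLt h h1 h2
    have hdisj : ∀ x, x ∈ E → x ∈ O → False := by
      rintro x ⟨c, rfl⟩ ⟨d, hd⟩
      rcases ltTot h c d with hl | he | hr
      · have h1 : S.lt (c + c) (d + d) := by
          have := ltT h _ _ _ (addLt h c d c hl) (addLtL h c d d hl)
          rwa [ea, ea] at this
        have h2 : S.lt (d + d) (d + d + 1) := by rw [← ea, ← e1]; exact ltAddOne h _
        have := ltT h _ _ _ h1 h2
        rw [← hd] at this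
        exact ltI h _ this
      · subst he
        have : S.lt (c + c) (c + c + 1) := by rw [← ea, ← e1]; exact ltAddOne h _
        rw [← hd] at this
        exact ltI h _ this
      · have h1 : S.le ((d + 1) + (d + 1)) (c + c) := by
          have hdc : S.le (S.add d S.one) c := succLe h hr
          rw [ea, e1] at hdc
          have := leTrans h (addLe h hdc) (addLeL h hdc)
          rwa [ea, ea] at this
        have h2 : S.lt (d + d + 1) ((d + 1) + (d + 1)) := by
          have := ltAddOne h (d + d + 1)
          rw [ea, e1] at this
          rwa [show d + d + 1 + 1 = (d + 1) + (d + 1) by ring] at this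
        have := ltOfLtOfLe h h2 h1
        rw [← hd] at this
        exact ltI h _ this
    have hEP : E ∈ P := ⟨hE𝔛, hEunb⟩
    have hOP : O ∈ P := ⟨hO𝔛, hOunb⟩
    obtain ⟨C, hCG, hCE, hCO⟩ := gdir E (hprop ▸ hEP) O (hprop ▸ hOP)
    obtain ⟨x, hx⟩ := unb_nonempty (hCG.1.2)
    exact hdisj x (hCE hx) (hCO hx)
  · -- `G` is a proper filter extending `U`, hence `G = U`
    have gfilter : IsFilterOn P G := by
      refine ⟨fun D hD => hD.1, ⟨B0, gU hB0⟩, hprop, ?_, gdir⟩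
      rintro D ⟨hDP, B, hB, c, hc⟩ D' hD'P hDD'
      exact ⟨hD'P, B, hB, c, fun x hx => hDD' (hc hx)⟩
    have hGU : G = U := hU.2 G gfilter gU
    have hTG : {x : M | S.lt b x} ∈ G := by
      refine ⟨⟨tail_mem hACA (U_setmem hU hB0) b, unb_tail h b⟩, B0, hB0, b,
        fun x hx => hx.2⟩
    exact hGU ▸ hTG

/-- The key ultrafilter dichotomy. -/
lemma ultra_dichotomy (hACA : SatACA0 S 𝔛) {A : Set M} (hA𝔛 : A ∈ 𝔛) :
    A ∈ U ∨ Aᶜ ∈ U := by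
  have h := hACA.1
  by_cases hcase : ∀ B ∈ U, S.Unb (B ∩ A)
  · by_cases hAc : S.Unb Aᶜ
    · left
      obtain ⟨B0, hB0⟩ := U_nonempty hU
      set P : Set (Set M) := S.PX 𝔛 with hPdef
      set G : Set (Set M) := {D | D ∈ P ∧ ∃ B ∈ U, B ∩ A ⊆ D} with hGdef
      have gU : U ⊆ G := fun D hD => ⟨hU.1.1 hD, D, hD, fun x hx => hx.1⟩
      have hprop : G ≠ P := by
        intro hGP
        have hAcP : Aᶜ ∈ P := ⟨compl_mem hACA hA𝔛, hAc⟩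
        obtain ⟨_, B, hB, hBA⟩ : Aᶜ ∈ G := hGP ▸ hAcP
        obtain ⟨x, hx⟩ := unb_nonempty (hcase B hB)
        exact (hBA hx) hx.2
      have gfilter : IsFilterOn P G := by
        refine ⟨fun D hD => hD.1, ⟨B0, gU hB0⟩, hprop, ?_, ?_⟩
        · rintro D ⟨hDP, B, hB, hc⟩ D' hD'P hDD'
          exact ⟨hD'P, B, hB, fun x hx => hDD' (hc hx)⟩
        · rintro D1 ⟨hD1P, B1, hB1, hc1⟩ D2 ⟨hD2P, B2, hB2, hc2⟩
          have hB12 : B1 ∩ B2 ∈ U := interU_mem hU hACA hB1 hB2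
          set C := (B1 ∩ B2) ∩ A with hCdef
          have hCP : C ∈ P := ⟨inter_mem hACA (U_setmem hU hB12) hA𝔛, hcase _ hB12⟩
          refine ⟨C, ⟨hCP, B1 ∩ B2, hB12, fun x hx => hx⟩, ?_, ?_⟩
          · exact fun x hx => hc1 ⟨hx.1.1, hx.2⟩
          · exact fun x hx => hc2 ⟨hx.1.2, hx.2⟩
      have hGU : G = U := hU.2 G gfilter gU
      have hAunb : S.Unb A := by
        obtain ⟨x, hx⟩ := U_nonempty hU
        exact unb_mono (fun y hy => hy.2) (hcase x hx)
      have hAG : A ∈ G := ⟨⟨hA𝔛, hAunb⟩, B0, hB0, fun x hx => hx.2⟩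
      exact hGU ▸ hAG
    · left
      unfold AStr.Unb at hAc
      push_neg at hAc
      obtain ⟨b, hb⟩ := hAc
      have hsub : {x : M | S.lt b x} ⊆ A := by
        intro x hx
        by_contra hxA
        exact hb x hxA hx
      exact up_mem hU (tail_mem_U hU hACA b) hA𝔛 hsub
  · right
    push_neg at hcase
    obtain ⟨B, hB, hBA⟩ := hcase
    unfold AStr.Unb at hBA
    push_neg at hBA
    obtain ⟨b, hb⟩ := hBA
    have hsub : B ∩ {x : M | S.lt b x} ⊆ Aᶜ := by
      rintro x ⟨hxB, hxb⟩ hxA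
      exact hb x ⟨hxB, hxA⟩ hxb
    exact up_mem hU (interU_mem hU hACA hB (tail_mem_U hU hACA b))
      (compl_mem hACA hA𝔛) hsub

lemma not_mem_of_mem_U (hACA : SatACA0 S 𝔛) {A : Set M} (hA : A ∈ U) : Aᶜ ∉ U := by
  intro hAc
  have := interU_mem hU hACA hA hAc
  rw [Set.inter_compl_self] at this
  exact empty_not_mem hU this

lemma compl_mem_U_iff (hACA : SatACA0 S 𝔛) {A : Set M} (hA𝔛 : A ∈ 𝔛) :
    Aᶜ ∈ U ↔ A ∉ U := by
  constructor
  · intro h1 h2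
    exact not_mem_of_mem_U hU hACA h2 h1
  · intro h1
    rcases ultra_dichotomy hU hACA hA𝔛 with h2 | h2
    · exact absurd h2 h1
    · exact h2

end Ultra

/-! ### Transfer along the isomorphism `ϱ` -/

section Rho

variable {M KT : Type} {K : AStr KT} {K0 : AStr M} {ϱ : KT → M}

lemma val_rho (hr0 : ϱ K.zero = K0.zero) (hr1 : ϱ K.one = K0.one)
    (hradd : ∀ a b, ϱ (K.add a b) = K0.add (ϱ a) (ϱ b))
    (hrmul : ∀ a b, ϱ (K.mul a b) = K0.mul (ϱ a) (ϱ b)) :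
    ∀ (t : PTerm) (v : ℕ → KT), ϱ (t.val K v) = t.val K0 (fun i => ϱ (v i)) := by
  intro t
  induction t with
  | var n => intro v; rfl
  | zero => intro v; exact hr0
  | one => intro v; exact hr1
  | add t u iht ihu => intro v; simp only [PTerm.val, hradd, iht, ihu]
  | mul t u iht ihu => intro v; simp only [PTerm.val, hrmul, iht, ihu]

lemma satFO_rho (hrbij : Function.Bijective ϱ)
    (hr0 : ϱ K.zero = K0.zero) (hr1 : ϱ K.one = K0.one)
    (hradd : ∀ a b, ϱ (K.add a b) = K0.add (ϱ a) (ϱ b))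
    (hrmul : ∀ a b, ϱ (K.mul a b) = K0.mul (ϱ a) (ϱ b))
    (hrlt : ∀ a b, K.lt a b ↔ K0.lt (ϱ a) (ϱ b)) :
    ∀ (φ : Fml), φ.IsFO → ∀ v : ℕ → KT,
      (SatFO K v φ ↔ SatFO K0 (fun i => ϱ (v i)) φ) := by
  intro φ
  induction φ with
  | eq t u =>
      intro _ v
      show t.val K v = u.val K v ↔ t.val K0 _ = u.val K0 _
      rw [← val_rho hr0 hr1 hradd hrmul, ← val_rho hr0 hr1 hradd hrmul]
      exact ⟨fun e => e ▸ rfl, fun e => hrbij.1 e⟩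
  | lt t u =>
      intro _ v
      show K.lt (t.val K v) (u.val K v) ↔ K0.lt (t.val K0 _) (u.val K0 _)
      rw [← val_rho hr0 hr1 hradd hrmul, ← val_rho hr0 hr1 hradd hrmul]
      exact hrlt _ _
  | mem t k => intro hFO; exact hFO.elim
  | not φ ih =>
      intro hFO v
      exact not_congr (ih hFO v)
  | imp φ ψ ihφ ihψ =>
      intro hFO v
      exact imp_congr (ihφ hFO.1 v) (ihψ hFO.2 v)
  | all x φ ih =>
      intro hFO v
      show (∀ a : KT, SatFO K (Function.update v x a) φ) ↔
        (∀ b : M, SatFO K0 (Function.update (fun i => ϱ (v i)) x b) φ)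
      have hupd : ∀ (a : KT), (fun i => ϱ (Function.update v x a i)) =
          Function.update (fun i => ϱ (v i)) x (ϱ a) := by
        intro a
        funext i
        by_cases hix : i = x
        · subst hix; simp
        · simp [Function.update_of_ne hix]
      constructor
      · intro hh b
        obtain ⟨a, rfl⟩ := hrbij.2 b
        rw [← hupd a]
        exact (ih hFO _).mp (hh a)
      · intro hh a
        refine (ih hFO _).mpr ?_
        rw [hupd a]
        exact hh (ϱ a)
  | allS k φ ih => intro hFO; exact hFO.elim

end Rho

/-! ### Arithmetized satisfaction via the coded elementary diagram -/

section SatDiag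

variable {M : Type} {S : AStr M} {𝔛 : Set (Set M)} {K0 : AStr M} {C : Set M}

/-- Abbreviation for the coded-diagram hypothesis. -/
def DiagHyp (S : AStr M) (K0 : AStr M) (C : Set M) : Prop :=
  ∀ (φ : Fml) (l : ℕ) (v : ℕ → M), Fml.IsFO φ → φ.freeN ⊆ Finset.range l →
    (SatFO K0 v φ ↔ ∃ s p, S.SeqLen s (S.num l) ∧
      (∀ i < l, S.SeqAt s (S.num i) (v i)) ∧
      S.PairRel p (S.num (Fml.code φ)) s ∧ p ∈ C)

lemma satdiag_defn (hdiag : DiagHyp S K0 C)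
    (w : ℕ → Set M) (hw0 : w 0 = C)
    (c : ℕ → M → M) (hc : ∀ i a b, c i a = b ↔ b ∈ S.SliceAt (w (i+1)) a)
    (φ : Fml) (l : ℕ) (hFO : φ.IsFO) (hfr : φ.freeN ⊆ Finset.range l)
    (x : ℕ) (t r : PTerm) (q : ℕ) (hq : ∀ j ∈ t.vars ∪ r.vars, j < q) :
    Defn S 𝔛 w (fun v =>
      SatFO K0 (Function.update (fun i => c i (t.val S v)) x (r.val S v)) φ) := by
  have ht : ∀ j ∈ t.vars, j < q := fun j hj => hq j (by simp [hj])
  have hr : ∀ j ∈ r.vars, j < q := fun j hj => hq j (by simp [hj])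
  -- the conjunct for slot `i`
  set Q : ℕ → (ℕ → M) → Prop := fun i v =>
    if i = x then S.SeqAt (v q) (S.num i) (r.val S v)
    else ∃ b, b ∈ S.SliceAt (w (i+1)) (t.val S v) ∧ S.SeqAt (v q) (S.num i) b with hQdef
  have hQ : ∀ i, i < l → Defn S 𝔛 w (Q i) := by
    intro i _
    by_cases hix : i = x
    · have := defn_seqat (S := S) (𝔛 := 𝔛) (w := w) (.var q) (numeral i) r (q+1)
        (by
          intro j hj
          simp only [PTerm.vars, numeral_vars, Finset.union_empty, Finset.mem_union,
            Finset.mem_singleton] at hj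
          rcases hj with rfl | hj
          · omega
          · exact Nat.lt_of_lt_of_le (hr j hj) (by omega))
      refine defn_congr this fun v => ?_
      simp only [hQdef, hix, if_pos rfl, PTerm.val, numeral_val]
    · have := defn_ex (S := S) (𝔛 := 𝔛) (w := w) (q+2)
        (defn_and
          (defn_slice (i+1) t (.var (q+2)) (q+3)
            (by
              intro j hj
              simp only [PTerm.vars, Finset.mem_union, Finset.mem_singleton] at hj
              rcases hj with hj | rfl
              · exact Nat.lt_of_lt_of_le (ht j hj) (by omega)
              · omega))
          (defn_seqat (.var q) (numeral i) (.var (q+2)) (q+3)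
            (by
              intro j hj
              simp only [PTerm.vars, numeral_vars, Finset.union_empty, Finset.mem_union,
                Finset.mem_singleton] at hj
              rcases hj with rfl | rfl
              · omega
              · omega)))
      refine defn_congr this fun v => ?_
      simp only [hQdef, if_neg hix, PTerm.val, numeral_val]
      constructor
      · rintro ⟨b, h1, h2⟩
        refine ⟨b, ?_, ?_⟩
        · rwa [PTerm.val_update_ge ht (by omega), Function.update_self] at h1
        · rwa [Function.update_of_ne (by omega : q ≠ q + 2),
            Function.update_self] at h2
      · rintro ⟨b, h1, h2⟩
        refine ⟨b, ?_, ?_⟩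
        · rwa [PTerm.val_update_ge ht (by omega), Function.update_self]
        · rwa [Function.update_of_ne (by omega : q ≠ q + 2), Function.update_self]
  have hB : Defn S 𝔛 w (fun v =>
      S.SeqLen (v q) (S.num l) ∧ (∀ i < l, Q i v) ∧
      S.PairRel (v (q+1)) (S.num (Fml.code φ)) (v q) ∧ (v (q+1)) ∈ w 0) := by
    have h1 := defn_seqlen (S := S) (𝔛 := 𝔛) (w := w) (.var q) (numeral l) (q+2)
      (by
        intro j hj
        simp only [PTerm.vars, numeral_vars, Finset.union_empty,
          Finset.mem_singleton] at hj
        omega)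
    have h2 := defn_conjLt l Q hQ
    have h3 := defn_pair (S := S) (𝔛 := 𝔛) (w := w) (.var (q+1))
      (numeral (Fml.code φ)) (.var q)
    have h4 := defn_mem (S := S) (𝔛 := 𝔛) (w := w) (.var (q+1)) 0
    refine defn_congr (defn_and h1 (defn_and h2 (defn_and h3 h4))) fun v => ?_
    simp only [PTerm.val, numeral_val]
  have base := defn_ex (S := S) (𝔛 := 𝔛) (w := w) q (defn_ex (q+1) hB)
  refine defn_congr base fun v => ?_
  rw [hdiag φ l _ hFO hfr]
  constructor
  · rintro ⟨b1, b2, hB1, hB2, hB3, hB4⟩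
    -- read off the components at the updated valuation
    refine ⟨b1, b2, ?_, ?_, ?_, ?_⟩
    · rwa [Function.update_of_ne (by omega : q ≠ q+1), Function.update_self] at hB1
    · intro i hi
      have hQi := hB2 i hi
      simp only [hQdef] at hQi
      by_cases hix : i = x
      · rw [if_pos hix] at hQi
        rw [Function.update_of_ne (by omega : q ≠ q+1), Function.update_self,
          PTerm.val_upd2 hr (by omega) (by omega)] at hQi
        subst hix
        simpa [Function.update_self] using hQi
      · rw [if_neg hix] at hQi
        obtain ⟨b, hb1, hb2⟩ := hQi
        rw [PTerm.val_upd2 ht (by omega) (by omega)] at hb1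
        rw [Function.update_of_ne (by omega : q ≠ q+1), Function.update_self] at hb2
        have : c i (t.val S v) = b := (hc i _ b).mpr hb1
        rw [Function.update_of_ne hix]
        rwa [this]
    · rwa [Function.update_self, Function.update_of_ne (by omega : q ≠ q+1),
        Function.update_self] at hB3
    · rwa [Function.update_self, hw0] at hB4
  · rintro ⟨s', p', h1, h2, h3, h4⟩
    refine ⟨s', p', ?_, ?_, ?_, ?_⟩
    · rwa [Function.update_of_ne (by omega : q ≠ q+1), Function.update_self]
    · intro i hi
      simp only [hQdef]
      by_cases hix : i = x
      · rw [if_pos hix]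
        rw [Function.update_of_ne (by omega : q ≠ q+1), Function.update_self,
          PTerm.val_upd2 hr (by omega) (by omega)]
        have := h2 i hi
        subst hix
        rwa [Function.update_self] at this
      · rw [if_neg hix]
        rw [PTerm.val_upd2 ht (by omega) (by omega)]
        refine ⟨c i (t.val S v), (hc i _ _).mp rfl, ?_⟩
        rw [Function.update_of_ne (by omega : q ≠ q+1), Function.update_self]
        have := h2 i hi
        rwa [Function.update_of_ne hix] at this
    · rwa [Function.update_self, Function.update_of_ne (by omega : q ≠ q+1),
        Function.update_self]
    · rwa [Function.update_self, hw0]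

end SatDiag

section Consumers

variable {M : Type} {S : AStr M} {𝔛 : Set (Set M)} {K0 : AStr M} {C : Set M}

lemma freeN_bound (φ : Fml) : φ.freeN ⊆ Finset.range (φ.freeN.sup id + 1) := by
  intro j hj
  exact Finset.mem_range.mpr (Nat.lt_succ_of_le (Finset.le_sup (f := id) hj))

lemma losSet (hACA : SatACA0 S 𝔛) (hdiag : DiagHyp S K0 C) (hC : C ∈ 𝔛)
    (G : ℕ → Set M) (hG : ∀ i, G i ∈ 𝔛) (c : ℕ → M → M)
    (hc : ∀ i a b, c i a = b ↔ b ∈ S.SliceAt (G i) a)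
    (φ : Fml) (hFO : φ.IsFO) :
    {a : M | SatFO K0 (fun i => c i a) φ} ∈ 𝔛 := by
  set l := φ.freeN.sup id + 1 with hl
  set w : ℕ → Set M := fun k => Nat.casesOn k C G with hw
  have hwmem : ∀ k, w k ∈ 𝔛 := by
    intro k
    cases k
    · exact hC
    · exact hG _
  have hD := satdiag_defn (𝔛 := 𝔛) hdiag w rfl c hc φ l hFO (freeN_bound φ) l
    (.var 0) (.var 0) 1
    (by intro j hj; simp only [PTerm.vars, Finset.mem_union, Finset.mem_singleton] at hj
        rcases hj with rfl | rfl <;> omega)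
  have hmem := defn_comp hACA hwmem hD (fun _ => S.zero)
  convert hmem using 1
  ext a
  simp only [Set.mem_setOf_eq, PTerm.val, Function.update_self]
  exact SatFO_congr K0 φ _ _ fun i hi => by
    rw [Function.update_of_ne]
    intro hil
    rw [hil] at hi
    exact absurd (Finset.mem_range.mp (freeN_bound φ hi)) (by omega)

lemma mk_coded (hACA : SatACA0 S 𝔛) (w : ℕ → Set M) (hw : ∀ k, w k ∈ 𝔛)
    (g : M → M) (P : (ℕ → M) → Prop) (hD : Defn S 𝔛 w P)
    (hP : ∀ (u : ℕ → M) (a b : M),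
      g a = b ↔ P (Function.update (Function.update u 1 a) 2 b)) :
    S.CodedFun 𝔛 g := by
  have base := defn_ex (S := S) (𝔛 := 𝔛) (w := w) 1 (defn_ex 2
    (defn_and (defn_pair (.var 0) (.var 1) (.var 2)) hD))
  have hG := defn_comp hACA hw base (fun _ => S.zero)
  refine ⟨_, hG, ?_⟩
  intro a b
  constructor
  · intro hgab
    obtain ⟨p, hp⟩ := pair_total hACA (hw 0) a b
    refine ⟨p, hp, ?_⟩
    refine ⟨a, b, ?_, ?_⟩
    · simp only [PTerm.val, Function.update_apply]
      norm_num
      exact hp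
    · exact (hP _ a b).mp hgab
  · rintro ⟨p, hp, a', b', hp', hPv⟩
    simp only [PTerm.val, Function.update_apply] at hp'
    norm_num at hp'
    obtain ⟨ha', hb'⟩ := pair_inj hACA.1 hp' hp
    have := (hP _ a' b').mpr hPv
    rw [ha', hb'] at this
    exact this

lemma singleton_mem (hACA : SatACA0 S 𝔛) {X0 : Set M} (hX0 : X0 ∈ 𝔛) (c : M) :
    {x : M | x = c} ∈ 𝔛 := by
  have := hACA.2.2 (.eq (.var 0) (.var 1)) 0 trivial (fun _ => c) (fun _ => X0)
    (fun _ => hX0)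
  convert this using 1
  rfl

lemma coded_const (hACA : SatACA0 S 𝔛) {X0 : Set M} (hX0 : X0 ∈ 𝔛) (c : M) :
    S.CodedFun 𝔛 (fun _ => c) := by
  have hsing := singleton_mem hACA hX0 c
  refine mk_coded hACA (fun _ => {x : M | x = c}) (fun _ => hsing) _
    (fun v => v 2 ∈ {x : M | x = c})
    (defn_congr (defn_mem (.var 2) 0) fun v => by simp [PTerm.val]) ?_
  intro u a b
  simp only [Set.mem_setOf_eq, Function.update_apply]
  norm_num
  exact eq_comm

lemma coded_of_fml (hACA : SatACA0 S 𝔛) (hdiag : DiagHyp S K0 C) (hC : C ∈ 𝔛)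
    (G : ℕ → Set M) (hG : ∀ i, G i ∈ 𝔛) (c : ℕ → M → M)
    (hc : ∀ i a b, c i a = b ↔ b ∈ S.SliceAt (G i) a)
    (ψ : Fml) (l : ℕ) (hFO : ψ.IsFO) (hfr : ψ.freeN ⊆ Finset.range l) (x : ℕ)
    (g : M → M)
    (hg : ∀ a b, g a = b ↔ SatFO K0 (Function.update (fun i => c i a) x b) ψ) :
    S.CodedFun 𝔛 g := by
  set w : ℕ → Set M := fun k => Nat.casesOn k C G with hw
  have hwmem : ∀ k, w k ∈ 𝔛 := by
    intro k; cases k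
    · exact hC
    · exact hG _
  refine mk_coded hACA w hwmem g _
    (satdiag_defn hdiag w rfl c hc ψ l hFO hfr x (.var 1) (.var 2) 3
      (by intro j hj
          simp only [PTerm.vars, Finset.mem_union, Finset.mem_singleton] at hj
          rcases hj with rfl | rfl <;> omega)) ?_
  intro u a b
  rw [hg]
  simp only [PTerm.val, Function.update_apply]
  norm_num

lemma skolem_coded (hACA : SatACA0 S 𝔛) (hdiag : DiagHyp S K0 C) (hC : C ∈ 𝔛)
    (G : ℕ → Set M) (hG : ∀ i, G i ∈ 𝔛) (c : ℕ → M → M)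
    (hc : ∀ i a b, c i a = b ↔ b ∈ S.SliceAt (G i) a)
    (φ : Fml) (l : ℕ) (hFO : φ.IsFO) (hfr : φ.freeN ⊆ Finset.range l) (x : ℕ) :
    ∃ g : M → M, S.CodedFun 𝔛 g ∧
      ∀ a, (∃ b, ¬ SatFO K0 (Function.update (fun i => c i a) x b) φ) →
        ¬ SatFO K0 (Function.update (fun i => c i a) x (g a)) φ := by
  classical
  set w : ℕ → Set M := fun k => Nat.casesOn k C G with hw
  have hwmem : ∀ k, w k ∈ 𝔛 := by
    intro k; cases k
    · exact hC
    · exact hG _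
  set D : M → M → Prop :=
    fun a b => ¬ SatFO K0 (Function.update (fun i => c i a) x b) φ with hD
  have hDset : ∀ a, {b : M | D a b} ∈ 𝔛 := by
    intro a
    have hDefn := defn_not (satdiag_defn (𝔛 := 𝔛) hdiag w rfl c hc φ l hFO hfr x
      (.var 1) (.var 0) 2
      (by intro j hj
          simp only [PTerm.vars, Finset.mem_union, Finset.mem_singleton] at hj
          rcases hj with rfl | rfl <;> omega))
    have := defn_comp hACA hwmem hDefn (fun _ => a)
    convert this using 1
    rfl
  set g : M → M := fun a =>
    if h : ∃ b, D a b then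
      (least_elem hACA (hDset a) (Classical.choose_spec h)).choose
    else S.zero with hgdef
  have hgmin : ∀ a, (∃ b, D a b) → D a (g a) ∧ ∀ b', D a b' → S.le (g a) b' := by
    intro a h
    simp only [hgdef, dif_pos h]
    have spec := (least_elem hACA (hDset a) (Classical.choose_spec h)).choose_spec
    exact ⟨spec.1, spec.2⟩
  have hgzero : ∀ a, ¬ (∃ b, D a b) → g a = S.zero := by
    intro a h
    simp only [hgdef, dif_neg h]
  have hgr : ∀ a b, g a = b ↔
      ((D a b ∧ ∀ b', D a b' → S.le b b') ∨ ((∀ b', ¬ D a b') ∧ b = S.zero)) := by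
    intro a b
    by_cases h : ∃ b', D a b'
    · obtain ⟨hm, hmin⟩ := hgmin a h
      constructor
      · rintro rfl
        exact Or.inl ⟨hm, hmin⟩
      · rintro (⟨hb, hbmin⟩ | ⟨hall, rfl⟩)
        · exact leAntisymm hACA.1 (hmin b hb) (hbmin _ hm)
        · exact ((hall _ h.choose_spec)).elim
    · push_neg at h
      rw [hgzero a (by push_neg; exact h)]
      constructor
      · rintro rfl
        exact Or.inr ⟨h, rfl⟩
      · rintro (⟨hb, _⟩ | ⟨_, rfl⟩)
        · exact absurd hb (h b)
        · rfl
  refine ⟨g, ?_, fun a h => (hgmin a h).1⟩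
  -- definability of the graph relation
  have P1 := defn_not (satdiag_defn (S := S) (𝔛 := 𝔛) hdiag w rfl c hc φ l hFO hfr x
    (.var 1) (.var 2) 4
    (by intro j hj
        simp only [PTerm.vars, Finset.mem_union, Finset.mem_singleton] at hj
        rcases hj with rfl | rfl <;> omega))
  have Psat := satdiag_defn (S := S) (𝔛 := 𝔛) hdiag w rfl c hc φ l hFO hfr x
    (.var 1) (.var 3) 4
    (by intro j hj
        simp only [PTerm.vars, Finset.mem_union, Finset.mem_singleton] at hj
        rcases hj with rfl | rfl <;> omega)
  have Pd := defn_not Psat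
  have P2 := defn_all (S := S) (𝔛 := 𝔛) (w := w) 3
    (defn_imp Pd (defn_le (.var 2) (.var 3)))
  have P3 := defn_all (S := S) (𝔛 := 𝔛) (w := w) 3 Psat
  have P4 := defn_eq (S := S) (𝔛 := 𝔛) (w := w) (.var 2) .zero
  have hDefn := defn_or (defn_and P1 P2) (defn_and P3 P4)
  refine mk_coded hACA w hwmem g _ hDefn ?_
  intro u a b
  rw [hgr]
  have ev1 : ∀ b' : M, (Function.update (Function.update u 1 a) 2 b) 1 = a := by
    intro _; simp [Function.update_apply]
  constructor
  · rintro (⟨h1, h2⟩ | ⟨h1, h2⟩)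
    · left
      constructor
      · simp only [PTerm.val, Function.update_apply]
        norm_num
        exact h1
      · intro b'
        simp only [PTerm.val, Function.update_apply]
        norm_num
        exact h2 b'
    · right
      constructor
      · intro b'
        simp only [PTerm.val, Function.update_apply]
        norm_num
        exact not_not.mp (h1 b')
      · simp only [PTerm.val, Function.update_apply]
        norm_num
        exact h2
  · rintro (⟨h1, h2⟩ | ⟨h1, h2⟩)
    · left
      simp only [PTerm.val, Function.update_apply] at h1 h2
      norm_num at h1 h2
      exact ⟨h1, h2⟩
    · right
      simp only [PTerm.val, Function.update_apply] at h1 h2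
      norm_num at h1 h2
      exact ⟨fun b' hd => hd (h1 b'), h2⟩

end Consumers

/-! ### The restricted ultrapower: Łoś's theorem -/

section Los

variable {M KT NT : Type} {S : AStr M} {𝔛 : Set (Set M)} {K : AStr KT} {K0 : AStr M}
  {C : Set M} {ϱ : KT → M} {U : Set (Set M)} {SN : AStr NT} {π : (M → KT) → NT}

lemma satFO_eq_iff (S' : AStr KT) (v : ℕ → KT) (t u : PTerm) :
    SatFO S' v (.eq t u) ↔ t.val S' v = u.val S' v := Iff.rfl

lemma satFO_all_iff (S' : AStr KT) (v : ℕ → KT) (x : ℕ) (φ : Fml) :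
    SatFO S' v (.all x φ) ↔ ∀ a, SatFO S' (Function.update v x a) φ := Iff.rfl

lemma coded_pointwise (hACA : SatACA0 S 𝔛) (hdiag : DiagHyp S K0 C) (hC : C ∈ 𝔛)
    (c0 c1 : M → M) (h0 : S.CodedFun 𝔛 c0) (h1 : S.CodedFun 𝔛 c1)
    (isMul : Bool) :
    S.CodedFun 𝔛 (fun a => if isMul then K0.mul (c0 a) (c1 a) else K0.add (c0 a) (c1 a)) := by
  obtain ⟨G0, hG0m, hG0⟩ := h0
  obtain ⟨G1, hG1m, hG1⟩ := h1
  set cc : ℕ → M → M := fun i => if i = 0 then c0 else c1 with hcc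
  set GG : ℕ → Set M := fun i => if i = 0 then G0 else G1 with hGG
  have hGGm : ∀ i, GG i ∈ 𝔛 := by
    intro i
    by_cases hi : i = 0 <;> simp [hGG, hi, hG0m, hG1m]
  have hccG : ∀ i a b, cc i a = b ↔ b ∈ S.SliceAt (GG i) a := by
    intro i a b
    by_cases hi : i = 0 <;> simp [hcc, hGG, hi, hG0 a b, hG1 a b]
  set ψ : Fml := if isMul then .eq (.mul (.var 0) (.var 1)) (.var 2)
    else .eq (.add (.var 0) (.var 1)) (.var 2) with hψ
  have hFO : ψ.IsFO := by cases isMul <;> simp [hψ] <;> trivial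
  have hfr : ψ.freeN ⊆ Finset.range 3 := by
    cases isMul <;> simp [hψ] <;> decide
  refine coded_of_fml hACA hdiag hC GG hGGm cc hccG ψ 3 hFO hfr 2 _ ?_
  intro a b
  cases isMul <;>
    simp [hψ, SatFO, Sat, PTerm.val, hcc, Function.update_apply]

/-- Term evaluation in the restricted ultrapower. -/
lemma los_term (hACA : SatACA0 S 𝔛) (hdiag : DiagHyp S K0 C) (hC : C ∈ 𝔛)
    (hr0 : ϱ K.zero = K0.zero) (hr1 : ϱ K.one = K0.one)
    (hradd : ∀ a b, ϱ (K.add a b) = K0.add (ϱ a) (ϱ b))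
    (hrmul : ∀ a b, ϱ (K.mul a b) = K0.mul (ϱ a) (ϱ b))
    (hzero : ∀ f : M → KT, S.CodedFun 𝔛 (fun a => ϱ (f a)) → (∀ a, f a = K.zero) →
      π f = SN.zero)
    (hone : ∀ f : M → KT, S.CodedFun 𝔛 (fun a => ϱ (f a)) → (∀ a, f a = K.one) →
      π f = SN.one)
    (hadd : ∀ f g h : M → KT, S.CodedFun 𝔛 (fun a => ϱ (f a)) →
      S.CodedFun 𝔛 (fun a => ϱ (g a)) → S.CodedFun 𝔛 (fun a => ϱ (h a)) →
      (∀ a, h a = K.add (f a) (g a)) → SN.add (π f) (π g) = π h)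
    (hmul : ∀ f g h : M → KT, S.CodedFun 𝔛 (fun a => ϱ (f a)) →
      S.CodedFun 𝔛 (fun a => ϱ (g a)) → S.CodedFun 𝔛 (fun a => ϱ (h a)) →
      (∀ a, h a = K.mul (f a) (g a)) → SN.mul (π f) (π g) = π h) :
    ∀ (t : PTerm) (f : ℕ → M → KT), (∀ i, S.CodedFun 𝔛 (fun a => ϱ (f i a))) →
      ∃ g : M → KT, S.CodedFun 𝔛 (fun a => ϱ (g a)) ∧
        (∀ a, g a = t.val K (fun i => f i a)) ∧
        π g = t.val SN (fun i => π (f i)) := by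
  intro t
  induction t with
  | var n =>
      intro f hf
      exact ⟨f n, hf n, fun a => rfl, rfl⟩
  | zero =>
      intro f hf
      refine ⟨fun _ => K.zero, ?_, fun a => rfl, ?_⟩
      · exact coded_const hACA hC (ϱ K.zero)
      · exact hzero _ (coded_const hACA hC (ϱ K.zero)) fun a => rfl
  | one =>
      intro f hf
      refine ⟨fun _ => K.one, ?_, fun a => rfl, ?_⟩
      · exact coded_const hACA hC (ϱ K.one)
      · exact hone _ (coded_const hACA hC (ϱ K.one)) fun a => rfl
  | add t u iht ihu =>
      intro f hf
      obtain ⟨g1, hc1, hv1, hπ1⟩ := iht f hf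
      obtain ⟨g2, hc2, hv2, hπ2⟩ := ihu f hf
      refine ⟨fun a => K.add (g1 a) (g2 a), ?_, ?_, ?_⟩
      · have he : (fun a => ϱ (K.add (g1 a) (g2 a))) =
            fun a => K0.add (ϱ (g1 a)) (ϱ (g2 a)) := funext fun a => hradd _ _
        rw [he]
        have := coded_pointwise hACA hdiag hC (fun a => ϱ (g1 a)) (fun a => ϱ (g2 a))
          hc1 hc2 false
        simpa using this
      · intro a
        simp only [PTerm.val, hv1 a, hv2 a]
      · have hcg : S.CodedFun 𝔛 (fun a => ϱ (K.add (g1 a) (g2 a))) := by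
          have he : (fun a => ϱ (K.add (g1 a) (g2 a))) =
              fun a => K0.add (ϱ (g1 a)) (ϱ (g2 a)) := funext fun a => hradd _ _
          rw [he]
          have := coded_pointwise hACA hdiag hC (fun a => ϱ (g1 a)) (fun a => ϱ (g2 a))
            hc1 hc2 false
          simpa using this
        have := hadd g1 g2 (fun a => K.add (g1 a) (g2 a)) hc1 hc2 hcg fun a => rfl
        simp only [PTerm.val, ← hπ1, ← hπ2, this]
  | mul t u iht ihu =>
      intro f hf
      obtain ⟨g1, hc1, hv1, hπ1⟩ := iht f hf
      obtain ⟨g2, hc2, hv2, hπ2⟩ := ihu f hf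
      refine ⟨fun a => K.mul (g1 a) (g2 a), ?_, ?_, ?_⟩
      · have he : (fun a => ϱ (K.mul (g1 a) (g2 a))) =
            fun a => K0.mul (ϱ (g1 a)) (ϱ (g2 a)) := funext fun a => hrmul _ _
        rw [he]
        have := coded_pointwise hACA hdiag hC (fun a => ϱ (g1 a)) (fun a => ϱ (g2 a))
          hc1 hc2 true
        simpa using this
      · intro a
        simp only [PTerm.val, hv1 a, hv2 a]
      · have hcg : S.CodedFun 𝔛 (fun a => ϱ (K.mul (g1 a) (g2 a))) := by
          have he : (fun a => ϱ (K.mul (g1 a) (g2 a))) =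
              fun a => K0.mul (ϱ (g1 a)) (ϱ (g2 a)) := funext fun a => hrmul _ _
          rw [he]
          have := coded_pointwise hACA hdiag hC (fun a => ϱ (g1 a)) (fun a => ϱ (g2 a))
            hc1 hc2 true
          simpa using this
        have := hmul g1 g2 (fun a => K.mul (g1 a) (g2 a)) hc1 hc2 hcg fun a => rfl
        simp only [PTerm.val, ← hπ1, ← hπ2, this]

lemma losSetK (hACA : SatACA0 S 𝔛) (hdiag : DiagHyp S K0 C) (hC : C ∈ 𝔛)
    (hrbij : Function.Bijective ϱ)
    (hr0 : ϱ K.zero = K0.zero) (hr1 : ϱ K.one = K0.one)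
    (hradd : ∀ a b, ϱ (K.add a b) = K0.add (ϱ a) (ϱ b))
    (hrmul : ∀ a b, ϱ (K.mul a b) = K0.mul (ϱ a) (ϱ b))
    (hrlt : ∀ a b, K.lt a b ↔ K0.lt (ϱ a) (ϱ b))
    (f : ℕ → M → KT) (hf : ∀ i, S.CodedFun 𝔛 (fun a => ϱ (f i a)))
    (ψ : Fml) (hFO : ψ.IsFO) :
    {a : M | SatFO K (fun i => f i a) ψ} ∈ 𝔛 := by
  classical
  choose Gf hGf using hf
  have := losSet hACA hdiag hC Gf (fun i => (hGf i).1) (fun i a => ϱ (f i a))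
    (fun i => (hGf i).2) ψ hFO
  convert this using 1
  ext a
  simp only [Set.mem_setOf_eq]
  exact satFO_rho hrbij hr0 hr1 hradd hrmul hrlt ψ hFO _

end Los

section LosMain

variable {M KT NT : Type} {S : AStr M} {𝔛 : Set (Set M)} {K : AStr KT} {K0 : AStr M}
  {C : Set M} {ϱ : KT → M} {U : Set (Set M)} {SN : AStr NT} {π : (M → KT) → NT}

/-- Łoś's theorem for the restricted ultrapower. -/
lemma los_theorem (hACA : SatACA0 S 𝔛) (hC : C ∈ 𝔛) (hdiag : DiagHyp S K0 C)
    (hrbij : Function.Bijective ϱ)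
    (hr0 : ϱ K.zero = K0.zero) (hr1 : ϱ K.one = K0.one)
    (hradd : ∀ a b, ϱ (K.add a b) = K0.add (ϱ a) (ϱ b))
    (hrmul : ∀ a b, ϱ (K.mul a b) = K0.mul (ϱ a) (ϱ b))
    (hrlt : ∀ a b, K.lt a b ↔ K0.lt (ϱ a) (ϱ b))
    (hU : IsUltraOn (S.PX 𝔛) U)
    (hsurj : ∀ n : NT, ∃ f : M → KT, S.CodedFun 𝔛 (fun a => ϱ (f a)) ∧ π f = n)
    (heq : ∀ f g : M → KT, S.CodedFun 𝔛 (fun a => ϱ (f a)) →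
      S.CodedFun 𝔛 (fun a => ϱ (g a)) → (π f = π g ↔ {a : M | f a = g a} ∈ U))
    (hzero : ∀ f : M → KT, S.CodedFun 𝔛 (fun a => ϱ (f a)) → (∀ a, f a = K.zero) →
      π f = SN.zero)
    (hone : ∀ f : M → KT, S.CodedFun 𝔛 (fun a => ϱ (f a)) → (∀ a, f a = K.one) →
      π f = SN.one)
    (hadd : ∀ f g h : M → KT, S.CodedFun 𝔛 (fun a => ϱ (f a)) →
      S.CodedFun 𝔛 (fun a => ϱ (g a)) → S.CodedFun 𝔛 (fun a => ϱ (h a)) →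
      (∀ a, h a = K.add (f a) (g a)) → SN.add (π f) (π g) = π h)
    (hmul : ∀ f g h : M → KT, S.CodedFun 𝔛 (fun a => ϱ (f a)) →
      S.CodedFun 𝔛 (fun a => ϱ (g a)) → S.CodedFun 𝔛 (fun a => ϱ (h a)) →
      (∀ a, h a = K.mul (f a) (g a)) → SN.mul (π f) (π g) = π h)
    (hlt : ∀ f g : M → KT, S.CodedFun 𝔛 (fun a => ϱ (f a)) →
      S.CodedFun 𝔛 (fun a => ϱ (g a)) →
      (SN.lt (π f) (π g) ↔ {a : M | K.lt (f a) (g a)} ∈ U)) :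
    ∀ (φ : Fml), φ.IsFO → ∀ (f : ℕ → M → KT),
      (∀ i, S.CodedFun 𝔛 (fun a => ϱ (f i a))) →
      (SatFO SN (fun i => π (f i)) φ ↔ {a : M | SatFO K (fun i => f i a) φ} ∈ U) := by
  intro φ
  have hrho := satFO_rho (K := K) (K0 := K0) hrbij hr0 hr1 hradd hrmul hrlt
  have hXK : ∀ (f : ℕ → M → KT), (∀ i, S.CodedFun 𝔛 (fun a => ϱ (f i a))) →
      ∀ (ψ : Fml), ψ.IsFO → {a : M | SatFO K (fun i => f i a) ψ} ∈ 𝔛 :=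
    fun f hf ψ hFO =>
      losSetK hACA hdiag hC hrbij hr0 hr1 hradd hrmul hrlt f hf ψ hFO
  induction φ with
  | eq t u =>
      intro _ f hf
      obtain ⟨g1, hc1, hv1, hπ1⟩ := los_term hACA hdiag hC hr0 hr1 hradd hrmul
        hzero hone hadd hmul t f hf
      obtain ⟨g2, hc2, hv2, hπ2⟩ := los_term hACA hdiag hC hr0 hr1 hradd hrmul
        hzero hone hadd hmul u f hf
      show t.val SN _ = u.val SN _ ↔ _
      rw [← hπ1, ← hπ2, heq g1 g2 hc1 hc2]
      have hset : {a : M | g1 a = g2 a} =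
          {a : M | SatFO K (fun i => f i a) (.eq t u)} := by
        ext a
        show g1 a = g2 a ↔ t.val K _ = u.val K _
        rw [hv1 a, hv2 a]
      rw [hset]
  | lt t u =>
      intro _ f hf
      obtain ⟨g1, hc1, hv1, hπ1⟩ := los_term hACA hdiag hC hr0 hr1 hradd hrmul
        hzero hone hadd hmul t f hf
      obtain ⟨g2, hc2, hv2, hπ2⟩ := los_term hACA hdiag hC hr0 hr1 hradd hrmul
        hzero hone hadd hmul u f hf
      show SN.lt (t.val SN _) (u.val SN _) ↔ _
      rw [← hπ1, ← hπ2, hlt g1 g2 hc1 hc2]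
      have hset : {a : M | K.lt (g1 a) (g2 a)} =
          {a : M | SatFO K (fun i => f i a) (.lt t u)} := by
        ext a
        show K.lt (g1 a) (g2 a) ↔ K.lt (t.val K _) (u.val K _)
        rw [hv1 a, hv2 a]
      rw [hset]
  | mem t k => intro hFO; exact hFO.elim
  | not ψ ih =>
      intro hFO f hf
      have hψ𝔛 : {a : M | SatFO K (fun i => f i a) ψ} ∈ 𝔛 := hXK f hf ψ hFO
      show (¬ SatFO SN (fun i => π (f i)) ψ) ↔ _
      rw [ih hFO f hf]
      rw [show {a : M | SatFO K (fun i => f i a) (.not ψ)} =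
        {a : M | SatFO K (fun i => f i a) ψ}ᶜ from rfl]
      rw [compl_mem_U_iff hU hACA hψ𝔛]
  | imp ψ χ ihψ ihχ =>
      intro hFO f hf
      have hψ𝔛 : {a : M | SatFO K (fun i => f i a) ψ} ∈ 𝔛 := hXK f hf ψ hFO.1
      have hχ𝔛 : {a : M | SatFO K (fun i => f i a) χ} ∈ 𝔛 := hXK f hf χ hFO.2
      have himp𝔛 : {a : M | SatFO K (fun i => f i a) (.imp ψ χ)} ∈ 𝔛 :=
        hXK f hf (.imp ψ χ) hFO
      show (SatFO SN _ ψ → SatFO SN _ χ) ↔ _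
      rw [ihψ hFO.1 f hf, ihχ hFO.2 f hf]
      constructor
      · intro hh
        by_cases hmem : {a : M | SatFO K (fun i => f i a) ψ} ∈ U
        · refine up_mem hU (hh hmem) himp𝔛 ?_
          intro a ha _
          exact ha
        · have hcompl := (compl_mem_U_iff hU hACA hψ𝔛).mpr hmem
          refine up_mem hU hcompl himp𝔛 ?_
          intro a ha hsa
          exact absurd hsa ha
      · intro hh hψU
        have hint := interU_mem hU hACA hh hψU
        refine up_mem hU hint hχ𝔛 ?_
        rintro a ⟨h1, h2⟩
        exact h1 h2
  | all x ψ ih =>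
      intro hFO f hf
      classical
      set l := ψ.freeN.sup id + 1 with hldef
      constructor
      · intro hLHS
        by_contra hB
        have hB𝔛 : {a : M | SatFO K (fun i => f i a) (.all x ψ)} ∈ 𝔛 :=
          hXK f hf (.all x ψ) hFO
        have hBc := (compl_mem_U_iff hU hACA hB𝔛).mpr hB
        choose Gf hGf using hf
        obtain ⟨g', hg'cod, hg'min⟩ := skolem_coded hACA hdiag hC Gf
          (fun i => (hGf i).1) (fun i a => ϱ (f i a)) (fun i => (hGf i).2)
          ψ l hFO (freeN_bound ψ) x
        set gK : M → KT := fun a => Function.surjInv hrbij.2 (g' a) with hgK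
        have hcomp : (fun a => ϱ (gK a)) = g' :=
          funext fun a => Function.surjInv_eq hrbij.2 (g' a)
        have hgcod : S.CodedFun 𝔛 (fun a => ϱ (gK a)) := by rw [hcomp]; exact hg'cod
        set f' : ℕ → M → KT := Function.update f x gK with hf'def
        have hf' : ∀ i, S.CodedFun 𝔛 (fun a => ϱ (f' i a)) := by
          intro i
          by_cases hix : i = x
          · subst hix; rw [hf'def]; simp only [Function.update_self]; exact hgcod
          · rw [hf'def]; rw [Function.update_of_ne hix]; exact ⟨Gf i, hGf i⟩
        have hS : SatFO SN (fun i => π (f' i)) ψ := by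
          have heqv : (fun i => π (f' i)) =
              Function.update (fun i => π (f i)) x (π gK) := by
            funext i
            by_cases hix : i = x
            · subst hix; simp [hf'def]
            · simp [hf'def, Function.update_of_ne hix]
          rw [heqv]
          exact hLHS (π gK)
        have hA' : {a : M | SatFO K (fun i => f' i a) ψ} ∈ U := (ih hFO f' hf').mp hS
        obtain ⟨a, haA', haBc⟩ :=
          unb_nonempty (U_unb hU (interU_mem hU hACA hA' hBc))
        -- `a ∈ Bᶜ` gives a witness for failure, so the skolem value fails
        have hwit : ∃ b, ¬ SatFO K0
            (Function.update (fun i => ϱ (f i a)) x b) ψ := by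
          have : ¬ ∀ k : KT, SatFO K (Function.update (fun i => f i a) x k) ψ := haBc
          push_neg at this
          obtain ⟨k, hk⟩ := this
          refine ⟨ϱ k, ?_⟩
          intro hsat
          apply hk
          refine (hrho ψ hFO _).mpr ?_
          have : (fun i => ϱ (Function.update (fun j => f j a) x k i)) =
              Function.update (fun i => ϱ (f i a)) x (ϱ k) := by
            funext i
            by_cases hix : i = x
            · subst hix; simp
            · simp [Function.update_of_ne hix]
          rw [this]
          exact hsat
        have hfail := hg'min a hwit
        -- but `a ∈ A'` says the skolem value succeeds
        apply hfail
        have : (fun i => ϱ (f' i a)) =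
            Function.update (fun i => ϱ (f i a)) x (g' a) := by
          funext i
          by_cases hix : i = x
          · subst hix
            simp only [hf'def, Function.update_self]
            exact congrFun hcomp a
          · simp [hf'def, Function.update_of_ne hix]
        rw [← this]
        exact (hrho ψ hFO _).mp haA'
      · intro hB n
        obtain ⟨g, hgcod, rfl⟩ := hsurj n
        set f' : ℕ → M → KT := Function.update f x g with hf'def
        have hf' : ∀ i, S.CodedFun 𝔛 (fun a => ϱ (f' i a)) := by
          intro i
          by_cases hix : i = x
          · subst hix; rw [hf'def]; simp only [Function.update_self]; exact hgcod
          · rw [hf'def]; rw [Function.update_of_ne hix]; exact hf i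
        have heqv : Function.update (fun i => π (f i)) x (π g) =
            (fun i => π (f' i)) := by
          funext i
          by_cases hix : i = x
          · subst hix; simp [hf'def]
          · simp [hf'def, Function.update_of_ne hix]
        rw [heqv]
        refine (ih hFO f' hf').mpr ?_
        have hA'𝔛 : {a : M | SatFO K (fun i => f' i a) ψ} ∈ 𝔛 := hXK f' hf' ψ hFO
        refine up_mem hU hB hA'𝔛 ?_
        intro a ha
        have : (fun i => f' i a) = Function.update (fun i => f i a) x (g a) := by
          funext i
          by_cases hix : i = x
          · subst hix; simp [hf'def]
          · simp [hf'def, Function.update_of_ne hix]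
        show SatFO K _ ψ
        rw [this]
        exact ha (g a)
  | allS k ψ ih => intro hFO; exact hFO.elim

end LosMain


/-- The canonical embedding `F : K → N = ∏_𝔛 K / U`, mapping `a` to
the class of the constant function with value `a`, is elementary; consequently `N ⊨ T`. -/
theorem restricted_ultrapower_canonical_embedding_elementary
    {M KT NT : Type} (S : AStr M) (𝔛 : Set (Set M)) (T : Set Fml) (A : Set M)
    (K : AStr KT) (j : M → KT) (K0 : AStr M) (C : Set M) (ϱ : KT → M)
    (U : Set (Set M)) (SN : AStr NT) (π : (M → KT) → NT)
    -- the second-order structure (M,𝔛) ⊨ ACA₀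
    (hACA : SatACA0 S 𝔛)
    -- T ⊇ PA is a theory coded in 𝔛 with M ⊨ Con_T
    (hSent : ∀ φ ∈ T, IsFOSentence φ) (hPA : PAax ⊆ T)
    (hA : A ∈ 𝔛) (hTcode : ∀ n : ℕ, (S.num n ∈ A ↔ n ∈ theoryCode T))
    (hCon : S.SatConTheory T)
    -- M ⊆_e K : j embeds M onto an initial segment of K
    (hjinj : Function.Injective j)
    (hj0 : j S.zero = K.zero) (hj1 : j S.one = K.one)
    (hjadd : ∀ a b, j (S.add a b) = K.add (j a) (j b))
    (hjmul : ∀ a b, j (S.mul a b) = K.mul (j a) (j b))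
    (hjlt : ∀ a b, S.lt a b ↔ K.lt (j a) (j b))
    (hjinit : ∀ (x : KT) (a : M), K.lt x (j a) → ∃ b : M, j b = x)
    -- K₀ ⊨ T has domain M and its elementary diagram is coded by C ∈ 𝔛
    (hK0T : ModelsT K0 T) (hC : C ∈ 𝔛)
    (hdiag : ∀ (φ : Fml) (l : ℕ) (v : ℕ → M), Fml.IsFO φ → φ.freeN ⊆ Finset.range l →
      (SatFO K0 v φ ↔ ∃ s p, S.SeqLen s (S.num l) ∧ (∀ i < l, S.SeqAt s (S.num i) (v i)) ∧
        S.PairRel p (S.num (Fml.code φ)) s ∧ p ∈ C))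
    -- ϱ : K ≅ K₀ is an isomorphism
    (hrbij : Function.Bijective ϱ)
    (hr0 : ϱ K.zero = K0.zero) (hr1 : ϱ K.one = K0.one)
    (hradd : ∀ a b, ϱ (K.add a b) = K0.add (ϱ a) (ϱ b))
    (hrmul : ∀ a b, ϱ (K.mul a b) = K0.mul (ϱ a) (ϱ b))
    (hrlt : ∀ a b, K.lt a b ↔ K0.lt (ϱ a) (ϱ b))
    -- ϱ ∘ j is the canonical embedding of M into K₀, and it is coded in 𝔛
    (hcan0 : ϱ (j S.zero) = K0.zero)
    (hcansucc : ∀ a, ϱ (j (S.add a S.one)) = K0.add (ϱ (j a)) K0.one)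
    (hcancod : S.CodedFun 𝔛 (fun a => ϱ (j a)))
    -- U is an ultrafilter on P_𝔛
    (hU : IsUltraOn (S.PX 𝔛) U)
    -- (NT, SN, π) realizes the restricted ultrapower N = ∏_𝔛 K / U :
    -- π maps ∏_𝔛 K (the functions f with ϱ ∘ f coded in 𝔛) onto N,
    -- identifying f and g exactly when they agree on a set in U
    (hsurj : ∀ n : NT, ∃ f : M → KT, S.CodedFun 𝔛 (fun a => ϱ (f a)) ∧ π f = n)
    (heq : ∀ f g : M → KT, S.CodedFun 𝔛 (fun a => ϱ (f a)) →
      S.CodedFun 𝔛 (fun a => ϱ (g a)) → (π f = π g ↔ {a : M | f a = g a} ∈ U))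
    (hzero : ∀ f : M → KT, S.CodedFun 𝔛 (fun a => ϱ (f a)) → (∀ a, f a = K.zero) →
      π f = SN.zero)
    (hone : ∀ f : M → KT, S.CodedFun 𝔛 (fun a => ϱ (f a)) → (∀ a, f a = K.one) →
      π f = SN.one)
    (hadd : ∀ f g h : M → KT, S.CodedFun 𝔛 (fun a => ϱ (f a)) →
      S.CodedFun 𝔛 (fun a => ϱ (g a)) → S.CodedFun 𝔛 (fun a => ϱ (h a)) →
      (∀ a, h a = K.add (f a) (g a)) → SN.add (π f) (π g) = π h)
    (hmul : ∀ f g h : M → KT, S.CodedFun 𝔛 (fun a => ϱ (f a)) →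
      S.CodedFun 𝔛 (fun a => ϱ (g a)) → S.CodedFun 𝔛 (fun a => ϱ (h a)) →
      (∀ a, h a = K.mul (f a) (g a)) → SN.mul (π f) (π g) = π h)
    (hlt : ∀ f g : M → KT, S.CodedFun 𝔛 (fun a => ϱ (f a)) →
      S.CodedFun 𝔛 (fun a => ϱ (g a)) →
      (SN.lt (π f) (π g) ↔ {a : M | K.lt (f a) (g a)} ∈ U)) :
    ∀ F : KT → NT,
      (∀ (k : KT) (f : M → KT), S.CodedFun 𝔛 (fun a => ϱ (f a)) → (∀ a, f a = k) →
        π f = F k) →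
      (∀ (φ : Fml) (v : ℕ → KT), Fml.IsFO φ →
        (SatFO K v φ ↔ SatFO SN (fun k => F (v k)) φ)) ∧
      ModelsT SN T := by
  intro F hF
  have hdiag' : DiagHyp S K0 C := hdiag
  have hconstcod : ∀ k : KT, S.CodedFun 𝔛 (fun a : M => ϱ k) :=
    fun k => coded_const hACA hC (ϱ k)
  have hπconst : ∀ k : KT, π (fun _ => k) = F k :=
    fun k => hF k _ (hconstcod k) (fun a => rfl)
  have hlos := los_theorem hACA hC hdiag' hrbij hr0 hr1 hradd hrmul hrlt hU hsurj heq
    hzero hone hadd hmul hlt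
  have elem : ∀ (φ : Fml) (v : ℕ → KT), Fml.IsFO φ →
      (SatFO K v φ ↔ SatFO SN (fun k => F (v k)) φ) := by
    intro φ v hFO
    have hiff := hlos φ hFO (fun i => fun _ => v i) (fun i => hconstcod (v i))
    have hv : (fun i => π (fun _ => v i)) = fun k => F (v k) :=
      funext fun i => hπconst (v i)
    rw [hv] at hiff
    rw [hiff]
    by_cases hsat : SatFO K v φ
    · have hset : {a : M | SatFO K (fun i => v i) φ} = Set.univ := by
        ext a
        simpa using hsat
      rw [hset]
      exact iff_of_true hsat (univ_mem_U hU hACA)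
    · have hset : {a : M | SatFO K (fun i => v i) φ} = ∅ := by
        ext a
        simpa using hsat
      rw [hset]
      exact iff_of_false hsat (empty_not_mem hU)
  refine ⟨elem, ?_⟩
  intro φ hφT v''
  obtain ⟨hFO, hfree⟩ := hSent φ hφT
  set v0 : ℕ → KT := fun _ => K.zero with hv0
  have hK0sat : SatFO K0 (fun i => ϱ (v0 i)) φ := hK0T φ hφT _
  have hKsat : SatFO K v0 φ :=
    (satFO_rho hrbij hr0 hr1 hradd hrmul hrlt φ hFO v0).mpr hK0sat
  have hSNsat : SatFO SN (fun k => F (v0 k)) φ := (elem φ v0 hFO).mp hKsat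
  refine (SatFO_congr SN φ v'' (fun k => F (v0 k)) ?_).mpr hSNsat
  intro i hi
  rw [hfree] at hi
  exact absurd hi (Finset.notMem_empty i)


end Paper
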